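/- arXiv:1603.02304 — 7 statements merged into one kernel-verified Lean document; each statement's English description precedes it below -/
import Mathlib

section
/- For every pair of integers (p,q) ∈ ℤ², every real ρ ≥ 0, and every real σ, one has φ^{(p,q)}(ρ e^{iσ}) = e^{i(p-q)σ} · f^{(p,q)}(ρ). -/
/-- The bivariate polynomial `∂_Y^p ∂_X^q (1-XY)^{p+q-1}`, with `X = X 0`, `Y = X 1`. -/
noncomputable def scatteringD (p q : ℕ) : MvPolynomial (Fin 2) ℂ :=
  (fun P => MvPolynomial.pderiv (1 : Fin 2) P)^[p]
    ((fun P => MvPolynomial.pderiv (0 : Fin 2) P)^[q]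
      ((1 - MvPolynomial.X 0 * MvPolynomial.X 1) ^ (p + q - 1)))

/-- Scattering polynomial `φ^{(p,q)}`. -/
noncomputable def scatteringPhi (p q : ℤ) (ζ : ℂ) : ℂ :=
  if 1 ≤ p ∧ 1 ≤ q then
    ((-1 : ℂ) ^ p.toNat / ((q : ℂ) * (Nat.factorial (p.toNat + q.toNat - 1) : ℂ)))
      * (1 - ζ * (starRingEnd ℂ) ζ)
      * MvPolynomial.eval (fun i : Fin 2 => if i = 0 then ζ else (starRingEnd ℂ) ζ)
          (scatteringD p.toNat q.toNat)
  else if 0 ≤ p ∧ q = 0 then ζ ^ p.toNat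
  else 0

/-- The real polynomial `f^{(p,q)}`. -/
noncomputable def scatteringF (p q : ℤ) (x : ℝ) : ℝ :=
  if 1 ≤ p ∧ 1 ≤ q then
    (-1 : ℝ) ^ (q.toNat + (min p q - 1).toNat + 1) / (q : ℝ) * (1 - x ^ 2)
      * x ^ (p - q).natAbs
      * ∑ j ∈ Finset.range ((min p q - 1).toNat + 1),
          (-1 : ℝ) ^ j
            * ((Nat.factorial (j + (min p q - 1).toNat + (p - q).natAbs + 1) : ℝ) /
                ((Nat.factorial j : ℝ) * (Nat.factorial (j + (p - q).natAbs) : ℝ)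
                  * (Nat.factorial ((min p q - 1).toNat - j) : ℝ)))
            * x ^ (2 * j)
  else if 0 ≤ p ∧ q = 0 then x ^ p.toNat
  else 0

open MvPolynomial Finset

lemma scat_iterX (q a b : ℕ) (c : ℂ) :
    (fun P => MvPolynomial.pderiv (0 : Fin 2) P)^[q]
      (C c * X 0 ^ a * X 1 ^ b : MvPolynomial (Fin 2) ℂ)
    = C (c * a.descFactorial q) * X 0 ^ (a - q) * X 1 ^ b := by
  induction q with
  | zero => simp
  | succ q ih =>
    rw [Function.iterate_succ_apply', ih]
    have hd : pderiv (0 : Fin 2) (C (c * a.descFactorial q) * X 0 ^ (a - q) * X 1 ^ b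
        : MvPolynomial (Fin 2) ℂ)
        = C (c * a.descFactorial q * (a - q : ℕ)) * X 0 ^ (a - q - 1) * X 1 ^ b := by
      simp only [pderiv_mul, pderiv_pow, pderiv_X_self,
        pderiv_X_of_ne (show (1:Fin 2) ≠ 0 by decide), pderiv_C, mul_zero, zero_mul, add_zero,
        zero_add, mul_one]
      simp only [map_mul, MvPolynomial.C_eq_coe_nat]
      ring
    rw [hd, show a - q - 1 = a - (q+1) from by omega]
    congr 2
    rw [Nat.descFactorial_succ]
    push_cast
    ring

lemma scat_iterY (p a b : ℕ) (c : ℂ) :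
    (fun P => MvPolynomial.pderiv (1 : Fin 2) P)^[p]
      (C c * X 0 ^ a * X 1 ^ b : MvPolynomial (Fin 2) ℂ)
    = C (c * b.descFactorial p) * X 0 ^ a * X 1 ^ (b - p) := by
  induction p with
  | zero => simp
  | succ p ih =>
    rw [Function.iterate_succ_apply', ih]
    have hd : pderiv (1 : Fin 2) (C (c * b.descFactorial p) * X 0 ^ a * X 1 ^ (b - p)
        : MvPolynomial (Fin 2) ℂ)
        = C (c * b.descFactorial p * (b - p : ℕ)) * X 0 ^ a * X 1 ^ (b - p - 1) := by
      simp only [pderiv_mul, pderiv_pow, pderiv_X_self,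
        pderiv_X_of_ne (show (0:Fin 2) ≠ 1 by decide), pderiv_C, mul_zero, zero_mul, add_zero,
        zero_add, mul_one]
      simp only [map_mul, MvPolynomial.C_eq_coe_nat]
      ring
    rw [hd, show b - p - 1 = b - (p+1) from by omega]
    congr 2
    rw [Nat.descFactorial_succ]
    push_cast
    ring

lemma scat_iter_sum {i : Fin 2} (q : ℕ) {α : Type*} (s : Finset α)
    (g : α → MvPolynomial (Fin 2) ℂ) :
    (fun P => MvPolynomial.pderiv i P)^[q] (∑ x ∈ s, g x)
    = ∑ x ∈ s, (fun P => MvPolynomial.pderiv i P)^[q] (g x) := by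
  induction q with
  | zero => simp
  | succ q ih => simp only [Function.iterate_succ_apply', ih, map_sum]

lemma scat_expand_pow (n : ℕ) :
    ((1 - X 0 * X 1 : MvPolynomial (Fin 2) ℂ)) ^ n
    = ∑ k ∈ Finset.range (n+1), C ((-1:ℂ)^k * (n.choose k : ℂ)) * X 0 ^ k * X 1 ^ k := by
  have h := add_pow (-(X 0 * X 1) : MvPolynomial (Fin 2) ℂ) 1 n
  rw [show (1 - X 0 * X 1 : MvPolynomial (Fin 2) ℂ) = -(X 0 * X 1) + 1 from by ring, h]
  refine Finset.sum_congr rfl fun k _ => ?_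
  simp only [map_mul, map_pow, map_neg, map_one, MvPolynomial.C_eq_coe_nat, one_pow, mul_one]
  ring

lemma scat_evalD (P Q : ℕ) (ζ : ℂ) :
    MvPolynomial.eval (fun i : Fin 2 => if i = 0 then ζ else (starRingEnd ℂ) ζ) (scatteringD P Q)
    = ∑ k ∈ Finset.range (P+Q-1+1),
        ((-1:ℂ)^k * ((P+Q-1).choose k : ℂ) * (k.descFactorial Q : ℂ) * (k.descFactorial P : ℂ))
          * ζ^(k-Q) * ((starRingEnd ℂ) ζ)^(k-P) := by
  rw [scatteringD, scat_expand_pow, scat_iter_sum]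
  simp_rw [scat_iterX]
  rw [scat_iter_sum]
  simp_rw [scat_iterY]
  rw [map_sum]
  refine Finset.sum_congr rfl fun k _ => ?_
  simp only [eval_mul, eval_pow, eval_C, eval_X]
  norm_num

lemma scat_neg_one_pow_congr {a b : ℕ} (h : a % 2 = b % 2) : (-1:ℂ)^a = (-1:ℂ)^b := by
  rw [neg_one_pow_eq_pow_mod_two, h, ← neg_one_pow_eq_pow_mod_two]

lemma scat_coeff_eq (P Q j : ℕ) (hP : 1 ≤ P) (hQ : 1 ≤ Q) (hj : j < min P Q) :
    ((-1:ℂ)^P / ((Q:ℂ) * ((P+Q-1).factorial : ℂ))) *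
      ((-1:ℂ)^(max P Q + j) * (((P+Q-1).choose (max P Q + j)) : ℂ)
        * ((max P Q + j).descFactorial Q : ℂ) * ((max P Q + j).descFactorial P : ℂ))
    = (-1:ℂ)^(Q + (min P Q - 1) + 1) / (Q:ℂ) *
        ((-1:ℂ)^j * (((j + (min P Q - 1) + (max P Q - min P Q) + 1).factorial : ℂ) /
          ((j.factorial : ℂ) * ((j + (max P Q - min P Q)).factorial : ℂ)
            * (((min P Q - 1) - j).factorial : ℂ)))) := by
  set n := P + Q - 1 with hn
  set k := max P Q + j with hk
  have hkn : k ≤ n := by omega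
  have hQk : Q ≤ k := by omega
  have hPk : P ≤ k := by omega
  have h1 : (n.choose k : ℂ) * (k.factorial : ℂ) * ((n-k).factorial : ℂ) = (n.factorial : ℂ) := by
    exact_mod_cast congrArg (Nat.cast : ℕ → ℂ) (Nat.choose_mul_factorial_mul_factorial hkn)
  have h2 : ((k-Q).factorial : ℂ) * (k.descFactorial Q : ℂ) = (k.factorial : ℂ) := by
    exact_mod_cast congrArg (Nat.cast : ℕ → ℂ) (Nat.factorial_mul_descFactorial hQk)
  have h3 : ((k-P).factorial : ℂ) * (k.descFactorial P : ℂ) = (k.factorial : ℂ) := by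
    exact_mod_cast congrArg (Nat.cast : ℕ → ℂ) (Nat.factorial_mul_descFactorial hPk)
  have hfQ : ((k-Q).factorial : ℂ) ≠ 0 := Nat.cast_ne_zero.mpr (Nat.factorial_ne_zero _)
  have hfP : ((k-P).factorial : ℂ) ≠ 0 := Nat.cast_ne_zero.mpr (Nat.factorial_ne_zero _)
  have hfk : ((k).factorial : ℂ) ≠ 0 := Nat.cast_ne_zero.mpr (Nat.factorial_ne_zero _)
  have hfnk : ((n-k).factorial : ℂ) ≠ 0 := Nat.cast_ne_zero.mpr (Nat.factorial_ne_zero _)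
  have hfn : ((n).factorial : ℂ) ≠ 0 := Nat.cast_ne_zero.mpr (Nat.factorial_ne_zero _)
  have hQ0 : (Q:ℂ) ≠ 0 := Nat.cast_ne_zero.mpr (by omega)
  have hb2 : (k.descFactorial Q : ℂ) = (k.factorial : ℂ) / ((k-Q).factorial : ℂ) := by
    rw [eq_div_iff hfQ]; linear_combination h2
  have hb3 : (k.descFactorial P : ℂ) = (k.factorial : ℂ) / ((k-P).factorial : ℂ) := by
    rw [eq_div_iff hfP]; linear_combination h3
  have ha : (n.choose k : ℂ) = (n.factorial : ℂ) / ((k.factorial : ℂ) * ((n-k).factorial : ℂ)) := by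
    rw [eq_div_iff (mul_ne_zero hfk hfnk)]; linear_combination h1
  have e1 : j + (min P Q - 1) + (max P Q - min P Q) + 1 = k := by omega
  have e2 : (min P Q - 1) - j = n - k := by omega
  have e3 : j.factorial * (j + (max P Q - min P Q)).factorial
      = (k-P).factorial * (k-Q).factorial := by
    rcases le_total Q P with h | h
    · rw [show k - P = j by omega, show k - Q = j + (max P Q - min P Q) by omega]
    · rw [show k - Q = j by omega, show k - P = j + (max P Q - min P Q) by omega, mul_comm]
  have hsgn : (-1:ℂ)^P * (-1:ℂ)^k = (-1:ℂ)^(Q + (min P Q - 1) + 1) * (-1:ℂ)^j := by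
    rw [← pow_add, ← pow_add]
    exact scat_neg_one_pow_congr (by omega)
  have e3' : (j.factorial:ℂ) * ((j + (max P Q - min P Q)).factorial:ℂ)
      = ((k-P).factorial:ℂ) * ((k-Q).factorial:ℂ) := by
    exact_mod_cast congrArg (Nat.cast : ℕ → ℂ) e3
  have hmag : ((P+Q-1).choose k : ℂ) * (k.descFactorial Q : ℂ) * (k.descFactorial P : ℂ)
        / ((Q:ℂ) * (n.factorial : ℂ))
      = (k.factorial : ℂ) / ((Q:ℂ) * ((j.factorial:ℂ) * ((j + (max P Q - min P Q)).factorial:ℂ)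
          * ((n-k).factorial:ℂ))) := by
    have hfj : (j.factorial : ℂ) ≠ 0 := Nat.cast_ne_zero.mpr (Nat.factorial_ne_zero _)
    have hfjm : ((j + (max P Q - min P Q)).factorial : ℂ) ≠ 0 :=
      Nat.cast_ne_zero.mpr (Nat.factorial_ne_zero _)
    rw [div_eq_div_iff (mul_ne_zero hQ0 hfn)
      (mul_ne_zero hQ0 (mul_ne_zero (mul_ne_zero hfj hfjm) hfnk))]
    linear_combination ((n.choose k : ℂ) * (k.descFactorial Q : ℂ) * (k.descFactorial P : ℂ)
        * (Q:ℂ) * ((n-k).factorial:ℂ)) * e3'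
      + ((n.choose k : ℂ) * (k.descFactorial P : ℂ) * (Q:ℂ) * ((n-k).factorial:ℂ)
        * ((k-P).factorial:ℂ)) * h2
      + ((n.choose k : ℂ) * (Q:ℂ) * ((n-k).factorial:ℂ) * (k.factorial:ℂ)) * h3
      + ((Q:ℂ) * (k.factorial:ℂ)) * h1
  rw [e1, e2]
  linear_combination (((P+Q-1).choose k : ℂ) * (k.descFactorial Q : ℂ) * (k.descFactorial P : ℂ)
      / ((Q:ℂ) * (n.factorial : ℂ))) * hsgn
    + ((-1:ℂ)^(Q + (min P Q - 1) + 1) * (-1:ℂ)^j) * hmag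

lemma scat_term_eval (ρ σ : ℝ) (e1 e2 : ℕ) :
    ((ρ:ℂ) * Complex.exp (Complex.I * σ))^e1
      * ((starRingEnd ℂ) ((ρ:ℂ) * Complex.exp (Complex.I * σ)))^e2
    = (ρ:ℂ)^(e1+e2) * Complex.exp (Complex.I * ((e1:ℂ) - (e2:ℂ)) * σ) := by
  have hconj : (starRingEnd ℂ) ((ρ:ℂ) * Complex.exp (Complex.I * σ))
      = (ρ:ℂ) * Complex.exp (-(Complex.I * σ)) := by
    rw [map_mul, Complex.conj_ofReal, ← Complex.exp_conj]
    congr 1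
    simp
  have hexp : Complex.exp ((e1:ℂ) * (Complex.I * σ)) * Complex.exp ((e2:ℂ) * (-(Complex.I * σ)))
      = Complex.exp (Complex.I * ((e1:ℂ) - (e2:ℂ)) * σ) := by
    rw [← Complex.exp_add]
    ring_nf
  rw [hconj, mul_pow, mul_pow, ← Complex.exp_nat_mul, ← Complex.exp_nat_mul, pow_add,
    mul_mul_mul_comm, hexp]

lemma scat_sum_reindex (P Q : ℕ) (hP : 1 ≤ P) (hQ : 1 ≤ Q) (g : ℕ → ℂ)
    (hg : ∀ k < max P Q, g k = 0) :
    ∑ k ∈ Finset.range (P+Q-1+1), g k = ∑ j ∈ Finset.range (min P Q), g (max P Q + j) := by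
  rw [show P+Q-1+1 = P+Q from by omega, Finset.range_eq_Ico,
    ← Finset.sum_Ico_consecutive _ (Nat.zero_le (max P Q)) (show max P Q ≤ P+Q from by omega),
    Finset.sum_eq_zero (fun k hk => hg k (Finset.mem_Ico.mp hk).2), zero_add,
    Finset.sum_Ico_eq_sum_range, show P+Q - max P Q = min P Q from by omega]

/-- for every `(p,q) ∈ ℤ²`, every real `ρ ≥ 0` and every real `σ`,
`φ^{(p,q)}(ρe^{iσ}) = e^{i(p-q)σ} f^{(p,q)}(ρ)`. -/
theorem statement2 (p q : ℤ) (ρ : ℝ) (hρ : 0 ≤ ρ) (σ : ℝ) :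
    scatteringPhi p q ((ρ : ℂ) * Complex.exp (Complex.I * (σ : ℂ))) =
      Complex.exp (Complex.I * ((p : ℂ) - (q : ℂ)) * (σ : ℂ)) * (scatteringF p q ρ : ℂ) := by
  by_cases hpq : 1 ≤ p ∧ 1 ≤ q
  · obtain ⟨hp, hq⟩ := hpq
    have hP : 1 ≤ p.toNat := by omega
    have hQ : 1 ≤ q.toNat := by omega
    have hpC : ((p.toNat : ℕ) : ℂ) = (p:ℂ) := by
      exact_mod_cast congrArg (Int.cast : ℤ → ℂ) (Int.toNat_of_nonneg (by omega : (0:ℤ) ≤ p))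
    have hqC : ((q.toNat : ℕ) : ℂ) = (q:ℂ) := by
      exact_mod_cast congrArg (Int.cast : ℤ → ℂ) (Int.toNat_of_nonneg (by omega : (0:ℤ) ≤ q))
    have hmin : (min p q - 1).toNat = min p.toNat q.toNat - 1 := by omega
    have hm : (p - q).natAbs = max p.toNat q.toNat - min p.toNat q.toNat := by omega
    have hrange : min p.toNat q.toNat - 1 + 1 = min p.toNat q.toNat := by omega
    rw [scatteringPhi, if_pos ⟨hp, hq⟩, scatteringF, if_pos ⟨hp, hq⟩, scat_evalD]
    set P := p.toNat
    set Q := q.toNat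
    set ζ := (ρ:ℂ) * Complex.exp (Complex.I * σ) with hζdef
    have hζ : ζ * (starRingEnd ℂ) ζ = (ρ:ℂ)^2 := by
      have h := scat_term_eval ρ σ 1 1
      simp only [pow_one, Nat.cast_one, sub_self, mul_zero, zero_mul, Complex.exp_zero,
        mul_one] at h
      exact h
    have hre : ∑ k ∈ Finset.range (P+Q-1+1),
        ((-1:ℂ)^k * ((P+Q-1).choose k : ℂ) * (k.descFactorial Q : ℂ) * (k.descFactorial P : ℂ))
          * ζ^(k-Q) * ((starRingEnd ℂ) ζ)^(k-P)
        = ∑ j ∈ Finset.range (min P Q),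
            ((-1:ℂ)^(max P Q + j) * ((P+Q-1).choose (max P Q + j) : ℂ)
              * ((max P Q + j).descFactorial Q : ℂ) * ((max P Q + j).descFactorial P : ℂ))
            * ((ρ:ℂ)^((max P Q - min P Q) + 2*j)
              * Complex.exp (Complex.I * ((p:ℂ) - (q:ℂ)) * σ)) := by
      rw [scat_sum_reindex P Q hP hQ _ (fun k hk => ?_)]
      · refine Finset.sum_congr rfl fun j hj => ?_
        rw [mul_assoc, scat_term_eval, show max P Q + j - Q + (max P Q + j - P)
            = (max P Q - min P Q) + 2*j from by omega,
          Nat.cast_sub (show Q ≤ max P Q + j from by omega),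
          Nat.cast_sub (show P ≤ max P Q + j from by omega),
          show Complex.I * (((max P Q + j : ℕ) - (Q:ℂ)) - ((max P Q + j : ℕ) - (P:ℂ))) * σ
            = Complex.I * ((p:ℂ) - (q:ℂ)) * σ from by rw [← hpC, ← hqC]; push_cast; ring]
      · rcases Nat.lt_or_ge k P with h | h
        · simp [Nat.descFactorial_eq_zero_iff_lt.mpr h]
        · have h' : k < Q := by omega
          simp [Nat.descFactorial_eq_zero_iff_lt.mpr h']
    rw [hre, hζ, hmin, hm, hrange]
    push_cast
    set E := Complex.exp (Complex.I * ((p:ℂ) - (q:ℂ)) * σ) with hE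
    rw [← hqC]
    simp only [Finset.mul_sum]
    refine Finset.sum_congr rfl fun j hj => ?_
    have hj' : j < min P Q := Finset.mem_range.mp hj
    rw [pow_add]
    linear_combination ((1 - (ρ:ℂ)^2) * (ρ:ℂ)^(max P Q - min P Q) * (ρ:ℂ)^(2*j)
        * E) * scat_coeff_eq P Q j hP hQ hj'
  · rw [scatteringPhi, if_neg hpq, scatteringF, if_neg hpq]
    by_cases h2 : 0 ≤ p ∧ q = 0
    · rw [if_pos h2, if_pos h2]
      rw [mul_pow, ← Complex.exp_nat_mul,
        show ((p.toNat : ℕ):ℂ) * (Complex.I * σ) = Complex.I * ((p:ℂ) - (q:ℂ)) * σ from by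
          rw [h2.2,
            show ((p.toNat:ℕ):ℂ) = (p:ℂ) from by
              exact_mod_cast congrArg (Int.cast : ℤ → ℂ) (Int.toNat_of_nonneg h2.1)]
          push_cast
          ring]
      push_cast
      ring
    · rw [if_neg h2, if_neg h2]
      simp
end

section
/- For every pair of nonnegative integers (p,q), the function F: ℝ² → ℂ defined by F(x,y) = φ^{(p,q)}(x+iy) satisfies, at every point (x,y) ∈ ℝ², the identity -((1-x²-y²)/4)·(∂²F/∂x² + ∂²F/∂y²)(x,y) = p·q·F(x,y); that is, φ^{(p,q)} is an eigenfunction of the weighted laplacian -Δ̃ = -((1-x²-y²)/4)(∂_xx + ∂_yy) with eigenvalue pq. -/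
open MvPolynomial

namespace ScatAux

abbrev R2 := MvPolynomial (Fin 2) ℂ

noncomputable def A : R2 → R2 := fun P => MvPolynomial.pderiv (0 : Fin 2) P
noncomputable def B : R2 → R2 := fun P => MvPolynomial.pderiv (1 : Fin 2) P
noncomputable def w : R2 := 1 - MvPolynomial.X 0 * MvPolynomial.X 1
noncomputable def Dg (p q n : ℕ) : R2 := B^[p] (A^[q] (w ^ n))

lemma pd_comm (i j : Fin 2) (f : R2) :
    pderiv i (pderiv j f) = pderiv j (pderiv i f) := by
  induction f using MvPolynomial.induction_on with
  | C c => simp [pderiv_C]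
  | add f g hf hg => simp [map_add, hf, hg]
  | mul_X f k hf =>
    simp only [pderiv_mul, map_add, pderiv_X, hf]
    cases' eq_or_ne k i with h h <;> cases' eq_or_ne k j with h' h' <;>
      simp [h, h', pderiv_X, Pi.single_apply] <;>
      (split <;> simp <;> ring)


lemma A_w : A w = - X 1 := by
  simp [A, w, pderiv_mul, pderiv_X_self, pderiv_X_of_ne (show (1:Fin 2) ≠ 0 by decide)]

lemma B_w : B w = - X 0 := by
  simp [B, w, pderiv_mul, pderiv_X_self, pderiv_X_of_ne (show (0:Fin 2) ≠ 1 by decide)]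

lemma A_w_pow (n : ℕ) : A (w ^ (n + 1)) = (-((n:ℂ) + 1)) • (X 1 * w ^ n) := by
  simp only [A, pderiv_pow, A_w]
  rw [show (pderiv (0 : Fin 2)) w = A w from rfl, A_w]
  simp only [Nat.add_sub_cancel]
  rw [smul_eq_C_mul]
  simp only [map_neg, map_add, map_one, map_natCast]
  push_cast
  ring

lemma B_w_pow (n : ℕ) : B (w ^ (n + 1)) = (-((n:ℂ) + 1)) • (X 0 * w ^ n) := by
  simp only [B, pderiv_pow]
  rw [show (pderiv (1 : Fin 2)) w = B w from rfl, B_w]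
  simp only [Nat.add_sub_cancel]
  rw [smul_eq_C_mul]
  simp only [map_neg, map_add, map_one, map_natCast]
  push_cast
  ring

lemma A_add (f g : R2) : A (f + g) = A f + A g := map_add _ _ _
lemma B_add (f g : R2) : B (f + g) = B f + B g := map_add _ _ _
lemma A_smul (c : ℂ) (f : R2) : A (c • f) = c • A f := by
  simp [A, smul_eq_C_mul, pderiv_C_mul]
lemma B_smul (c : ℂ) (f : R2) : B (c • f) = c • B f := by
  simp [B, smul_eq_C_mul, pderiv_C_mul]

lemma Ak_add (k : ℕ) (f g : R2) : A^[k] (f + g) = A^[k] f + A^[k] g := by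
  induction k generalizing f g with
  | zero => simp
  | succ k ih => simp [Function.iterate_succ_apply, A_add, ih]

lemma Bk_add (k : ℕ) (f g : R2) : B^[k] (f + g) = B^[k] f + B^[k] g := by
  induction k generalizing f g with
  | zero => simp
  | succ k ih => simp [Function.iterate_succ_apply, B_add, ih]

lemma Ak_smul (k : ℕ) (c : ℂ) (f : R2) : A^[k] (c • f) = c • A^[k] f := by
  induction k generalizing f with
  | zero => simp
  | succ k ih => simp [Function.iterate_succ_apply, A_smul, ih]

lemma Bk_smul (k : ℕ) (c : ℂ) (f : R2) : B^[k] (c • f) = c • B^[k] f := by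
  induction k generalizing f with
  | zero => simp
  | succ k ih => simp [Function.iterate_succ_apply, B_smul, ih]

/-- A commutes with multiplication by X 1. -/
lemma A_mul_X1 (f : R2) : A (X 1 * f) = X 1 * A f := by
  simp [A, pderiv_mul, pderiv_X_of_ne (show (1:Fin 2) ≠ 0 by decide)]

lemma B_mul_X0 (f : R2) : B (X 0 * f) = X 0 * B f := by
  simp [B, pderiv_mul, pderiv_X_of_ne (show (0:Fin 2) ≠ 1 by decide)]

lemma Ak_mul_X1 (k : ℕ) (f : R2) : A^[k] (X 1 * f) = X 1 * A^[k] f := by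
  induction k generalizing f with
  | zero => simp
  | succ k ih => simp [Function.iterate_succ_apply, A_mul_X1, ih]

lemma Bk_mul_X0 (k : ℕ) (f : R2) : B^[k] (X 0 * f) = X 0 * B^[k] f := by
  induction k generalizing f with
  | zero => simp
  | succ k ih => simp [Function.iterate_succ_apply, B_mul_X0, ih]

lemma A_mul_X0 (f : R2) : A (X 0 * f) = f + X 0 * A f := by
  simp [A, pderiv_mul, pderiv_X_self]
  ring

lemma B_mul_X1 (f : R2) : B (X 1 * f) = f + X 1 * B f := by
  simp [B, pderiv_mul, pderiv_X_self]
  ring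

/-- commutator of B-iterates with multiplication by X 1 -/
lemma Bk_mul_X1 (p : ℕ) (f : R2) :
    B^[p + 1] (X 1 * f) = X 1 * B^[p + 1] f + ((p:ℂ) + 1) • B^[p] f := by
  induction p generalizing f with
  | zero => simp [B_mul_X1, add_comm]
  | succ p ih =>
    rw [Function.iterate_succ_apply, B_mul_X1, Bk_add, ih]
    rw [Function.iterate_succ_apply B (p+1) f, Function.iterate_succ_apply B p f]
    push_cast
    module

lemma Ak_mul_X0 (q : ℕ) (f : R2) :
    A^[q + 1] (X 0 * f) = X 0 * A^[q + 1] f + ((q:ℂ) + 1) • A^[q] f := by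
  induction q generalizing f with
  | zero => simp [A_mul_X0, add_comm]
  | succ q ih =>
    rw [Function.iterate_succ_apply, A_mul_X0, Ak_add, ih]
    rw [Function.iterate_succ_apply A (q+1) f, Function.iterate_succ_apply A q f]
    push_cast
    module

lemma A_mul_w (f : R2) : A (w * f) = w * A f - X 1 * f := by
  rw [show A (w * f) = pderiv 0 w * f + w * pderiv 0 f from pderiv_mul,
    show pderiv (0:Fin 2) w = A w from rfl, A_w]
  simp only [A]
  ring

lemma B_mul_w (f : R2) : B (w * f) = w * B f - X 0 * f := by
  rw [show B (w * f) = pderiv 1 w * f + w * pderiv 1 f from pderiv_mul,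
    show pderiv (1:Fin 2) w = B w from rfl, B_w]
  simp only [B]
  ring

lemma Bk_mul_w (p : ℕ) (f : R2) :
    B^[p + 1] (w * f) = w * B^[p + 1] f - ((p:ℂ) + 1) • (X 0 * B^[p] f) := by
  induction p generalizing f with
  | zero => simp [B_mul_w]
  | succ p ih =>
    rw [Function.iterate_succ_apply, B_mul_w, show w * B f - X 0 * f
        = w * B f + (-1 : ℂ) • (X 0 * f) by module, Bk_add, Bk_smul, ih, Bk_mul_X0,
      Function.iterate_succ_apply B (p+1) f, Function.iterate_succ_apply B p f]
    push_cast
    module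

lemma Ak_mul_w (q : ℕ) (f : R2) :
    A^[q + 1] (w * f) = w * A^[q + 1] f - ((q:ℂ) + 1) • (X 1 * A^[q] f) := by
  induction q generalizing f with
  | zero => simp [A_mul_w]
  | succ q ih =>
    rw [Function.iterate_succ_apply, A_mul_w, show w * A f - X 1 * f
        = w * A f + (-1 : ℂ) • (X 1 * f) by module, Ak_add, Ak_smul, ih, Ak_mul_X1,
      Function.iterate_succ_apply A (q+1) f, Function.iterate_succ_apply A q f]
    push_cast
    module

lemma AB_comm (f : R2) : A (B f) = B (A f) := pd_comm 0 1 f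

lemma A_Bk (p : ℕ) (f : R2) : A (B^[p] f) = B^[p] (A f) := by
  induction p generalizing f with
  | zero => rfl
  | succ p ih => rw [Function.iterate_succ_apply, ih, AB_comm, Function.iterate_succ_apply]

lemma pd0_Dg (p q n : ℕ) : A (Dg p q n) = Dg p (q + 1) n := by
  rw [Dg, Dg, A_Bk, Function.iterate_succ_apply']

lemma pd1_Dg (p q n : ℕ) : B (Dg p q n) = Dg (p + 1) q n := by
  rw [Dg, Dg, Function.iterate_succ_apply']


lemma Ak_zero (k : ℕ) : A^[k] (0 : R2) = 0 := by
  induction k with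
  | zero => rfl
  | succ k ih => rw [Function.iterate_succ_apply', ih]; exact map_zero _

lemma Bk_zero (k : ℕ) : B^[k] (0 : R2) = 0 := by
  induction k with
  | zero => rfl
  | succ k ih => rw [Function.iterate_succ_apply', ih]; exact map_zero _

lemma Ak_sub (k : ℕ) (f g : R2) : A^[k] (f - g) = A^[k] f - A^[k] g := by
  rw [sub_eq_add_neg, show -g = (-1 : ℂ) • g by module, Ak_add, Ak_smul]; module

lemma Bk_sub (k : ℕ) (f g : R2) : B^[k] (f - g) = B^[k] f - B^[k] g := by
  rw [sub_eq_add_neg, show -g = (-1 : ℂ) • g by module, Bk_add, Bk_smul]; module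

noncomputable def Eop : R2 → R2 := fun f => X 0 * A f - X 1 * B f

lemma Eop_w_pow (n : ℕ) : Eop (w ^ n) = 0 := by
  cases n with
  | zero => simp [Eop, A, B, pderiv_one]
  | succ n =>
    rw [Eop, A_w_pow, B_w_pow, smul_eq_C_mul, smul_eq_C_mul]
    ring

lemma Eop_A (f : R2) : Eop (A f) = A (Eop f) - A f := by
  rw [Eop, Eop, show A (X 0 * A f - X 1 * B f) = A (X 0 * A f) - A (X 1 * B f) from
    map_sub _ _ _, A_mul_X0, A_mul_X1, AB_comm]
  ring

lemma Eop_B (f : R2) : Eop (B f) = B (Eop f) + B f := by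
  rw [Eop, Eop, show B (X 0 * A f - X 1 * B f) = B (X 0 * A f) - B (X 1 * B f) from
    map_sub _ _ _, B_mul_X0, B_mul_X1, AB_comm]
  ring

lemma Eop_Ak (q : ℕ) (f : R2) : Eop (A^[q] f) = A^[q] (Eop f) - (q:ℂ) • A^[q] f := by
  induction q generalizing f with
  | zero => simp
  | succ q ih =>
    rw [Function.iterate_succ_apply, ih, Eop_A, Ak_sub,
      Function.iterate_succ_apply A q (Eop f)]
    push_cast
    module

lemma Eop_Bk (p : ℕ) (f : R2) : Eop (B^[p] f) = B^[p] (Eop f) + (p:ℂ) • B^[p] f := by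
  induction p generalizing f with
  | zero => simp
  | succ p ih =>
    rw [Function.iterate_succ_apply, ih, Eop_B, Bk_add,
      Function.iterate_succ_apply B p (Eop f)]
    push_cast
    module

lemma euler (p q n : ℕ) :
    X 0 * Dg p (q + 1) n - X 1 * Dg (p + 1) q n = ((p:ℂ) - q) • Dg p q n := by
  have h : Eop (Dg p q n) = ((p:ℂ) - q) • Dg p q n := by
    rw [Dg, Eop_Bk, Eop_Ak, Eop_w_pow, Ak_zero, Bk_sub, Bk_smul, Bk_zero]
    module
  rw [← pd0_Dg, ← pd1_Dg]
  try exact h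

lemma rec1 (p q n : ℕ) : Dg (p+1) (q+1) (n+1)
    = (-((n:ℂ)+1)) • (X 1 * Dg (p+1) q n + ((p:ℂ)+1) • Dg p q n) := by
  rw [Dg, Function.iterate_succ_apply A q (w^(n+1)), A_w_pow, Ak_smul, Ak_mul_X1,
    Bk_smul, Bk_mul_X1]
  rw [Dg, Dg]
  try module

lemma w_mul_Dg (p q n : ℕ) :
    w * Dg (p+1) (q+1) n = Dg (p+1) (q+1) (n+1) + ((q:ℂ)+1) • (X 1 * Dg (p+1) q n)
      + (((q:ℂ)+1)*((p:ℂ)+1)) • Dg p q n + ((p:ℂ)+1) • (X 0 * Dg p (q+1) n) := by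
  have h2 : w * A^[q+1] (w^n) = A^[q+1] (w^(n+1)) + ((q:ℂ)+1) • (X 1 * A^[q] (w^n)) := by
    rw [show w^(n+1) = w * w^n from pow_succ' w n, Ak_mul_w]
    module
  have h1 : w * Dg (p+1) (q+1) n = B^[p+1] (w * A^[q+1] (w^n))
      + ((p:ℂ)+1) • (X 0 * B^[p] (A^[q+1] (w^n))) := by
    rw [Dg, Bk_mul_w]; module
  rw [h1, h2, Bk_add, Bk_smul, Bk_mul_X1, Dg, Dg, Dg, Dg]
  module

theorem keyMain (p q : ℕ) :
    pderiv (0:Fin 2) (pderiv (1:Fin 2) (w * Dg (p+1) (q+1) (p+q+1)))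
      = (-(((p:ℂ)+1) * ((q:ℂ)+1))) • Dg (p+1) (q+1) (p+q+1) := by
  have hAB : ∀ f : R2, pderiv (0:Fin 2) (pderiv (1:Fin 2) f) = A (B f) := fun _ => rfl
  rw [hAB, w_mul_Dg]
  set n := p + q + 1 with hn
  -- expand B then A
  simp only [B_add, B_smul, B_mul_X1, B_mul_X0, pd1_Dg,
    A_add, A_smul, A_mul_X1, A_mul_X0, pd0_Dg]
  -- now use rec1 at (p+1, q+1, n) and euler at (p+1, q+1, n)
  have hrec : Dg (p+2) (q+2) (n+1)
      = (-((n:ℂ)+1)) • (X 1 * Dg (p+2) (q+1) n + (((p:ℕ)+1:ℂ)+1) • Dg (p+1) (q+1) n) := by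
    have := rec1 (p+1) (q+1) n
    push_cast at this ⊢
    convert this using 3 <;> push_cast <;> ring
  have heul : X 0 * Dg (p+1) (q+2) n - X 1 * Dg (p+2) (q+1) n
      = (((p:ℕ)+1:ℂ) - ((q:ℕ)+1:ℂ)) • Dg (p+1) (q+1) n := by
    have := euler (p+1) (q+1) n
    push_cast at this ⊢
    convert this using 3 <;> push_cast <;> ring
  rw [sub_eq_iff_eq_add] at heul
  rw [show ((p:ℕ)+(q:ℕ)+1+1 : ℕ) = n + 1 by omega] at *
  rw [hrec, heul, hn]
  push_cast
  module



lemma hasDerivAt_eval (P : MvPolynomial (Fin 2) ℂ) (g : Fin 2 → ℝ → ℂ) (a : Fin 2 → ℂ)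
    (x : ℝ) (h : ∀ i, HasDerivAt (fun t => g i t) (a i) x) :
    HasDerivAt (fun t => eval (fun i => g i t) P)
      (eval (fun i => g i x) (pderiv 0 P) * a 0
        + eval (fun i => g i x) (pderiv 1 P) * a 1) x := by
  induction P using MvPolynomial.induction_on with
  | C c => simpa [pderiv_C] using hasDerivAt_const x c
  | add f f' hf hf' =>
    simpa [map_add, add_mul, Pi.add_def] using (hf.add hf').congr_deriv (by ring)
  | mul_X f i hf =>
    have hm := hf.mul (h i)
    have : (fun t => eval (fun j => g j t) (f * X i))
        = fun t => eval (fun j => g j t) f * g i t := by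
      funext t; simp [map_mul]
    rw [this]
    refine hm.congr_deriv ?_
    fin_cases i <;>
      simp [pderiv_mul, pderiv_X_self, pderiv_X_of_ne,
        (by decide : (0:Fin 2) ≠ 1), (by decide : (1:Fin 2) ≠ 0)] <;> ring

/-- first-order derivative polynomial -/
noncomputable def DP (a : Fin 2 → ℂ) (P : MvPolynomial (Fin 2) ℂ) : MvPolynomial (Fin 2) ℂ :=
  a 0 • pderiv 0 P + a 1 • pderiv 1 P

lemma deriv_eval (P : MvPolynomial (Fin 2) ℂ) (c : ℂ) (g : Fin 2 → ℝ → ℂ) (a : Fin 2 → ℂ)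
    (h : ∀ i t, HasDerivAt (fun s => g i s) (a i) t) :
    deriv (fun t => c * eval (fun i => g i t) P)
      = fun t => c * eval (fun i => g i t) (DP a P) := by
  funext t
  have h1 := ((hasDerivAt_eval P g a t (fun i => h i t)).const_mul c).deriv
  rw [h1, DP]
  simp only [map_add, smul_eq_C_mul, map_mul, eval_C]
  ring

lemma iteratedDeriv_two_eval (P : MvPolynomial (Fin 2) ℂ) (c : ℂ) (g : Fin 2 → ℝ → ℂ)
    (a : Fin 2 → ℂ) (h : ∀ i t, HasDerivAt (fun s => g i s) (a i) t) (x : ℝ) :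
    iteratedDeriv 2 (fun t => c * eval (fun i => g i t) P) x
      = c * eval (fun i => g i x) (DP a (DP a P)) := by
  show iteratedDeriv (1+1) _ x = _
  rw [iteratedDeriv_succ, iteratedDeriv_one,
    deriv_eval P c g a h, deriv_eval (DP a P) c g a h]




open Complex in
lemma lap_eval (P : MvPolynomial (Fin 2) ℂ) (c : ℂ) (x y : ℝ) :
    iteratedDeriv 2 (fun t : ℝ => c * eval
        (fun i : Fin 2 => if i = 0 then ((t:ℂ) + (y:ℂ)*I) else ((t:ℂ) - (y:ℂ)*I)) P) x
      + iteratedDeriv 2 (fun t : ℝ => c * eval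
        (fun i : Fin 2 => if i = 0 then ((x:ℂ) + (t:ℂ)*I) else ((x:ℂ) - (t:ℂ)*I)) P) y
      = c * (4 * eval (fun i : Fin 2 => if i = 0 then ((x:ℂ) + (y:ℂ)*I)
          else ((x:ℂ) - (y:ℂ)*I)) (pderiv 0 (pderiv 1 P))) := by
  have pds : ∀ (i : Fin 2) (c : ℂ) (f : MvPolynomial (Fin 2) ℂ),
      pderiv i (c • f) = c • pderiv i f := by
    intro i c f; simp [smul_eq_C_mul, pderiv_C_mul]
  have hgx : ∀ (i : Fin 2) (t : ℝ), HasDerivAt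
      (fun s : ℝ => if i = 0 then ((s:ℂ) + (y:ℂ)*I) else ((s:ℂ) - (y:ℂ)*I))
      ((![1, 1] : Fin 2 → ℂ) i) t := by
    intro i t
    fin_cases i <;> simp only [Matrix.cons_val_zero, Matrix.cons_val_one, Matrix.head_cons,
      if_true, if_false, reduceIte]
    · simpa using ((hasDerivAt_id t).ofReal_comp).add_const ((y:ℝ)*I : ℂ)
    · simpa using ((hasDerivAt_id t).ofReal_comp).sub_const ((y:ℝ)*I : ℂ)
  have hgy : ∀ (i : Fin 2) (t : ℝ), HasDerivAt
      (fun s : ℝ => if i = 0 then ((x:ℂ) + (s:ℂ)*I) else ((x:ℂ) - (s:ℂ)*I))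
      ((![I, -I] : Fin 2 → ℂ) i) t := by
    intro i t
    fin_cases i <;> simp only [Matrix.cons_val_zero, Matrix.cons_val_one, Matrix.head_cons,
      if_true, if_false, reduceIte]
    · simpa using (((hasDerivAt_id t).ofReal_comp).mul_const I).const_add (x:ℂ)
    · simpa using (HasDerivAt.const_sub (x:ℂ) (((hasDerivAt_id t).ofReal_comp).mul_const I))
  have h1 : iteratedDeriv 2 (fun t : ℝ => c * eval
        (fun i : Fin 2 => if i = 0 then ((t:ℂ) + (y:ℂ)*I) else ((t:ℂ) - (y:ℂ)*I)) P) x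
      = c * eval (fun i : Fin 2 => if i = 0 then ((x:ℂ) + (y:ℂ)*I) else ((x:ℂ) - (y:ℂ)*I))
        (DP ![1,1] (DP ![1,1] P)) :=
    iteratedDeriv_two_eval P c
      (fun i t => if i = 0 then ((t:ℂ) + (y:ℂ)*I) else ((t:ℂ) - (y:ℂ)*I)) ![1,1] hgx x
  have h2 : iteratedDeriv 2 (fun t : ℝ => c * eval
        (fun i : Fin 2 => if i = 0 then ((x:ℂ) + (t:ℂ)*I) else ((x:ℂ) - (t:ℂ)*I)) P) y
      = c * eval (fun i : Fin 2 => if i = 0 then ((x:ℂ) + (y:ℂ)*I) else ((x:ℂ) - (y:ℂ)*I))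
        (DP ![I,-I] (DP ![I,-I] P)) :=
    iteratedDeriv_two_eval P c
      (fun i t => if i = 0 then ((x:ℂ) + (t:ℂ)*I) else ((x:ℂ) - (t:ℂ)*I)) ![I,-I] hgy y
  have hpoly : DP ![1,1] (DP ![1,1] P) + DP ![I,-I] (DP ![I,-I] P)
      = (4:ℂ) • pderiv 0 (pderiv 1 P) := by
    simp only [DP, Matrix.cons_val_zero, Matrix.cons_val_one, Matrix.head_cons, map_add,
      map_neg, smul_neg, pds, smul_smul, one_smul, one_mul, mul_one, neg_mul, mul_neg,
      neg_neg, neg_smul]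
    rw [pd_comm 0 1 P]
    match_scalars <;> norm_num [Complex.I_mul_I]
  rw [h1, h2, ← mul_add, ← map_add, hpoly, smul_eq_C_mul, map_mul, eval_C]

end ScatAux

namespace ScatAux
open Complex

lemma sigma_eq (u v : ℝ) :
    (fun i : Fin 2 => if i = 0 then ((u:ℂ) + (v:ℂ)*I) else (starRingEnd ℂ) ((u:ℂ) + (v:ℂ)*I))
      = fun i : Fin 2 => if i = 0 then ((u:ℂ) + (v:ℂ)*I) else ((u:ℂ) - (v:ℂ)*I) := by
  funext i
  by_cases h : i = 0 <;> simp [h, map_add, map_mul, Complex.conj_ofReal, Complex.conj_I]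
  ring

lemma scatD_eq (p q : ℕ) : scatteringD p q = Dg p q (p + q - 1) := rfl

end ScatAux

open ScatAux Complex in
/-- for nonnegative integers `p,q`, the function `F(x,y) = φ^{(p,q)}(x+iy)`
satisfies `-((1-x²-y²)/4)(F_xx + F_yy) = pq·F` at every point `(x,y) ∈ ℝ²`;  i.e.
`φ^{(p,q)}` is an eigenfunction of `-Δ̃ = -((1-x²-y²)/4)Δ` with eigenvalue `pq`. -/
theorem statement3 (p q : ℕ) (x y : ℝ) :
    -(((1 - x ^ 2 - y ^ 2) / 4 : ℝ) : ℂ) *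
        (iteratedDeriv 2 (fun t : ℝ => scatteringPhi p q ((t : ℂ) + (y : ℂ) * Complex.I)) x +
         iteratedDeriv 2 (fun t : ℝ => scatteringPhi p q ((x : ℂ) + (t : ℂ) * Complex.I)) y) =
      (p : ℂ) * (q : ℂ) * scatteringPhi p q ((x : ℂ) + (y : ℂ) * Complex.I) := by
  rcases Nat.eq_zero_or_pos q with hq | hq
  · -- q = 0 : φ(ζ) = ζ^p, harmonic
    subst hq
    have hφ : ∀ u v : ℝ, scatteringPhi (p:ℤ) ((0:ℕ):ℤ) ((u:ℂ) + (v:ℂ)*I)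
        = (1:ℂ) * MvPolynomial.eval
            (fun i : Fin 2 => if i = 0 then ((u:ℂ) + (v:ℂ)*I) else ((u:ℂ) - (v:ℂ)*I))
            ((MvPolynomial.X 0 : MvPolynomial (Fin 2) ℂ) ^ p) := by
      intro u v
      rw [scatteringPhi]
      simp [MvPolynomial.eval_pow]
    have hf1 : (fun t : ℝ => scatteringPhi (p:ℤ) ((0:ℕ):ℤ) ((t:ℂ) + (y:ℂ)*I))
        = fun t : ℝ => (1:ℂ) * MvPolynomial.eval
            (fun i : Fin 2 => if i = 0 then ((t:ℂ) + (y:ℂ)*I) else ((t:ℂ) - (y:ℂ)*I))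
            ((MvPolynomial.X 0 : MvPolynomial (Fin 2) ℂ) ^ p) := by
      funext t; exact hφ t y
    have hf2 : (fun t : ℝ => scatteringPhi (p:ℤ) ((0:ℕ):ℤ) ((x:ℂ) + (t:ℂ)*I))
        = fun t : ℝ => (1:ℂ) * MvPolynomial.eval
            (fun i : Fin 2 => if i = 0 then ((x:ℂ) + (t:ℂ)*I) else ((x:ℂ) - (t:ℂ)*I))
            ((MvPolynomial.X 0 : MvPolynomial (Fin 2) ℂ) ^ p) := by
      funext t; exact hφ x t
    rw [hf1, hf2, lap_eval, hφ x y]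
    have hz : MvPolynomial.pderiv (0:Fin 2) (MvPolynomial.pderiv (1:Fin 2)
        ((MvPolynomial.X 0 : MvPolynomial (Fin 2) ℂ) ^ p)) = 0 := by
      rw [MvPolynomial.pderiv_pow,
        MvPolynomial.pderiv_X_of_ne (show (0:Fin 2) ≠ 1 by decide)]
      simp
    rw [hz]
    simp
  · rcases Nat.eq_zero_or_pos p with hp | hp
    · -- p = 0, q ≥ 1 : φ = 0
      subst hp
      have hφ : ∀ ζ : ℂ, scatteringPhi ((0:ℕ):ℤ) (q:ℤ) ζ = 0 := by
        intro ζ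
        rw [scatteringPhi, if_neg, if_neg]
        · exact fun h => (by omega : ¬ ((q:ℤ) = 0)) h.2
        · rintro ⟨h1, -⟩; omega
      have hf1 : (fun t : ℝ => scatteringPhi ((0:ℕ):ℤ) (q:ℤ) ((t:ℂ) + (y:ℂ)*I))
          = fun _ : ℝ => (0:ℂ) := by funext t; exact hφ _
      have hf2 : (fun t : ℝ => scatteringPhi ((0:ℕ):ℤ) (q:ℤ) ((x:ℂ) + (t:ℂ)*I))
          = fun _ : ℝ => (0:ℂ) := by funext t; exact hφ _
      have h0 : iteratedDeriv 2 (fun _ : ℝ => (0:ℂ)) = fun _ => (0:ℂ) := by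
        have : (fun _ : ℝ => (0:ℂ)) = fun t : ℝ => (0:ℂ) * MvPolynomial.eval
            (fun i : Fin 2 => ((t:ℂ))) (0 : MvPolynomial (Fin 2) ℂ) := by
          funext t; simp
        funext t
        rw [this, iteratedDeriv_two_eval _ _ _ (fun _ : Fin 2 => (1:ℂ))
          (fun i s => by exact ((hasDerivAt_id s).ofReal_comp)) t]
        simp
      rw [hf1, hf2, hφ, h0]
      simp
    · -- main case p, q ≥ 1
      obtain ⟨p', rfl⟩ : ∃ p', p = p' + 1 := ⟨p - 1, by omega⟩
      obtain ⟨q', rfl⟩ : ∃ q', q = q' + 1 := ⟨q - 1, by omega⟩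
      set c : ℂ := ((-1 : ℂ) ^ (p'+1) /
        (((q'+1 : ℕ) : ℂ) * (Nat.factorial ((p'+1) + (q'+1) - 1) : ℂ))) with hc
      set D : MvPolynomial (Fin 2) ℂ := Dg (p'+1) (q'+1) (p'+q'+1) with hD
      have hDD : scatteringD (p'+1) (q'+1) = D := by
        rw [scatD_eq, hD, show (p'+1) + (q'+1) - 1 = p'+q'+1 by omega]
      have hφ : ∀ u v : ℝ, scatteringPhi ((p'+1:ℕ):ℤ) ((q'+1:ℕ):ℤ) ((u:ℂ) + (v:ℂ)*I)
          = c * MvPolynomial.eval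
              (fun i : Fin 2 => if i = 0 then ((u:ℂ) + (v:ℂ)*I) else ((u:ℂ) - (v:ℂ)*I))
              (w * D) := by
        intro u v
        rw [scatteringPhi, if_pos (by constructor <;> omega), ← sigma_eq u v, map_mul]
        have hew : MvPolynomial.eval
            (fun i : Fin 2 => if i = 0 then ((u:ℂ) + (v:ℂ)*I)
              else (starRingEnd ℂ) ((u:ℂ) + (v:ℂ)*I)) w
            = 1 - ((u:ℂ) + (v:ℂ)*I) * (starRingEnd ℂ) ((u:ℂ) + (v:ℂ)*I) := by
          simp [w]
        rw [hew]
        have htn : ((p'+1:ℕ):ℤ).toNat = p'+1 := by simp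
        have htn' : ((q'+1:ℕ):ℤ).toNat = q'+1 := by simp
        rw [htn, htn', hDD, hc]
        push_cast
        ring
      have hf1 : (fun t : ℝ => scatteringPhi ((p'+1:ℕ):ℤ) ((q'+1:ℕ):ℤ) ((t:ℂ) + (y:ℂ)*I))
          = fun t : ℝ => c * MvPolynomial.eval
              (fun i : Fin 2 => if i = 0 then ((t:ℂ) + (y:ℂ)*I) else ((t:ℂ) - (y:ℂ)*I))
              (w * D) := by funext t; exact hφ t y
      have hf2 : (fun t : ℝ => scatteringPhi ((p'+1:ℕ):ℤ) ((q'+1:ℕ):ℤ) ((x:ℂ) + (t:ℂ)*I))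
          = fun t : ℝ => c * MvPolynomial.eval
              (fun i : Fin 2 => if i = 0 then ((x:ℂ) + (t:ℂ)*I) else ((x:ℂ) - (t:ℂ)*I))
              (w * D) := by funext t; exact hφ x t
      rw [hf1, hf2, lap_eval, hφ x y]
      rw [hD, keyMain p' q', ← hD]
      set σ : Fin 2 → ℂ :=
        fun i : Fin 2 => if i = 0 then ((x:ℂ) + (y:ℂ)*I) else ((x:ℂ) - (y:ℂ)*I) with hσ
      have hsmul : MvPolynomial.eval σ ((-(((p':ℂ)+1) * ((q':ℂ)+1))) • D)
          = (-(((p':ℂ)+1) * ((q':ℂ)+1))) * MvPolynomial.eval σ D := by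
        rw [MvPolynomial.smul_eq_C_mul, map_mul, MvPolynomial.eval_C]
      have hww : MvPolynomial.eval σ (w * D)
          = (((1 - x^2 - y^2 : ℝ)):ℂ) * MvPolynomial.eval σ D := by
        rw [map_mul]
        congr 1
        simp only [w, map_sub, map_one, map_mul, MvPolynomial.eval_X, hσ]
        simp only [if_true, reduceIte, Fin.isValue]
        push_cast
        ring_nf
        simp [Complex.I_sq]
        ring
      rw [hsmul, hww]
      push_cast
      ring
end

section
/- For all integers p,q ≥ 1, writing m = |p-q| and ν = min{p,q} - 1, one has for every ζ ∈ ℂ the explicit expansion φ^{(p,q)}(ζ) = ((-1)^{q+ν+1}/q)·(1-ζ·conj ζ)·ζ^{m+ν-q+1}·(conj ζ)^{m+ν-p+1}·Σ_{j=0}^{ν} (-1)^j ((j+ν+m+1)!/(j!(j+m)!(ν-j)!))·(ζ·conj ζ)^j. -/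
open MvPolynomial Finset

private lemma pd_iter_sum (i : Fin 2) (t : ℕ) (s : Finset ℕ) (f : ℕ → MvPolynomial (Fin 2) ℂ) :
    (fun Q => pderiv i Q)^[t] (∑ k ∈ s, f k) = ∑ k ∈ s, (fun Q => pderiv i Q)^[t] (f k) := by
  induction t with
  | zero => simp
  | succ t ih =>
    rw [Function.iterate_succ_apply', ih, map_sum]
    exact Finset.sum_congr rfl fun k _ => (Function.iterate_succ_apply' _ _ _).symm

private lemma pd_iter_C_mul (i : Fin 2) (t : ℕ) (c : ℂ) (P : MvPolynomial (Fin 2) ℂ) :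
    (fun Q => pderiv i Q)^[t] (C c * P) = C c * (fun Q => pderiv i Q)^[t] P := by
  induction t with
  | zero => simp
  | succ t ih => rw [Function.iterate_succ_apply', ih, Function.iterate_succ_apply', pderiv_C_mul]

private lemma pd0_iter (t a b : ℕ) :
    (fun Q => pderiv (0 : Fin 2) Q)^[t] (X 0 ^ a * X 1 ^ b : MvPolynomial (Fin 2) ℂ)
      = C ((a.descFactorial t : ℂ)) * (X 0 ^ (a - t) * X 1 ^ b) := by
  induction t with
  | zero => simp
  | succ t ih =>
    rw [Function.iterate_succ_apply', ih, pderiv_C_mul, pderiv_mul, pderiv_pow, pderiv_pow,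
      pderiv_X_self, pderiv_X_of_ne (show (1 : Fin 2) ≠ 0 by decide)]
    rw [Nat.descFactorial_succ, show a - t - 1 = a - (t+1) by omega, Nat.cast_mul, C_mul,
      map_natCast]
    simp only [map_natCast]
    ring

private lemma pd1_iter (t a b : ℕ) :
    (fun Q => pderiv (1 : Fin 2) Q)^[t] (X 0 ^ a * X 1 ^ b : MvPolynomial (Fin 2) ℂ)
      = C ((b.descFactorial t : ℂ)) * (X 0 ^ a * X 1 ^ (b - t)) := by
  induction t with
  | zero => simp
  | succ t ih =>
    rw [Function.iterate_succ_apply', ih, pderiv_C_mul, pderiv_mul, pderiv_pow, pderiv_pow,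
      pderiv_X_self, pderiv_X_of_ne (show (0 : Fin 2) ≠ 1 by decide)]
    rw [Nat.descFactorial_succ, show b - t - 1 = b - (t+1) by omega, Nat.cast_mul, C_mul,
      map_natCast]
    simp only [map_natCast]
    ring

private lemma expand_pow (n : ℕ) :
    ((1 : MvPolynomial (Fin 2) ℂ) - X 0 * X 1) ^ n
      = ∑ k ∈ range (n+1), C ((-1:ℂ)^k * (n.choose k : ℂ)) * (X 0 ^ k * X 1 ^ k) := by
  rw [sub_eq_add_neg, add_comm, add_pow]
  refine Finset.sum_congr rfl fun k hk => ?_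
  rw [neg_pow, mul_pow, one_pow, map_mul, map_pow, map_neg, map_one, map_natCast]
  ring

private lemma scatteringD_eq (p q : ℕ) :
    scatteringD p q = ∑ k ∈ Finset.range (p+q-1+1),
      C ((-1:ℂ)^k * ((p+q-1).choose k : ℂ) * (k.descFactorial q : ℂ) * (k.descFactorial p : ℂ))
        * (X 0 ^ (k-q) * X 1 ^ (k-p)) := by
  unfold scatteringD
  rw [expand_pow]
  have h1 : (fun Q => pderiv (0 : Fin 2) Q)^[q]
      (∑ k ∈ range (p+q-1+1), C ((-1:ℂ)^k * ((p+q-1).choose k : ℂ)) * (X 0 ^ k * X 1 ^ k))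
      = ∑ k ∈ range (p+q-1+1),
          C ((-1:ℂ)^k * ((p+q-1).choose k : ℂ) * (k.descFactorial q : ℂ))
            * (X 0 ^ (k-q) * X 1 ^ k) := by
    rw [pd_iter_sum]
    exact Finset.sum_congr rfl fun k _ => by
      rw [pd_iter_C_mul, pd0_iter, ← mul_assoc, ← C_mul]
  rw [h1, pd_iter_sum]
  refine Finset.sum_congr rfl fun k _ => ?_
  rw [pd_iter_C_mul, pd1_iter, ← mul_assoc, ← C_mul]

private lemma nat_fact_id (p q m ν j : ℕ) (hp : 1 ≤ p) (hq : 1 ≤ q)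
    (hm : m = max p q - min p q) (hν : ν = min p q - 1) (hj : j ≤ ν) :
    (p+q-1).choose (m+ν+1+j) * (m+ν+1+j).descFactorial q * (m+ν+1+j).descFactorial p
      * (j.factorial * (j+m).factorial * (ν-j).factorial)
    = (p+q-1).factorial * (m+ν+1+j).factorial := by
  set k := m+ν+1+j with hk
  have hkn : k ≤ p+q-1 := by omega
  have e3 : (p+q-1).choose k * k.factorial * (p+q-1-k).factorial = (p+q-1).factorial :=
    Nat.choose_mul_factorial_mul_factorial hkn
  have h3 : p+q-1-k = ν - j := by omega
  rw [h3] at e3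
  rcases le_total p q with hpq | hpq
  · have e1 : (k-q).factorial * k.descFactorial q = k.factorial :=
      Nat.factorial_mul_descFactorial (by omega)
    have e2 : (k-p).factorial * k.descFactorial p = k.factorial :=
      Nat.factorial_mul_descFactorial (by omega)
    rw [show k - q = j by omega] at e1
    rw [show k - p = j + m by omega] at e2
    have key : (p+q-1).choose k * k.descFactorial q * k.descFactorial p
        * (j.factorial * (j+m).factorial * (ν-j).factorial) * k.factorial
        = ((p+q-1).choose k * k.factorial * (ν-j).factorial)
          * (j.factorial * k.descFactorial q) * ((j+m).factorial * k.descFactorial p) := by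
      ring
    rw [e1, e2, e3] at key
    exact Nat.eq_of_mul_eq_mul_right (Nat.factorial_pos k) key
  · have e1 : (k-q).factorial * k.descFactorial q = k.factorial :=
      Nat.factorial_mul_descFactorial (by omega)
    have e2 : (k-p).factorial * k.descFactorial p = k.factorial :=
      Nat.factorial_mul_descFactorial (by omega)
    rw [show k - q = j + m by omega] at e1
    rw [show k - p = j by omega] at e2
    have key : (p+q-1).choose k * k.descFactorial q * k.descFactorial p
        * (j.factorial * (j+m).factorial * (ν-j).factorial) * k.factorial
        = ((p+q-1).choose k * k.factorial * (ν-j).factorial)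
          * ((j+m).factorial * k.descFactorial q) * (j.factorial * k.descFactorial p) := by
      ring
    rw [e1, e2, e3] at key
    exact Nat.eq_of_mul_eq_mul_right (Nat.factorial_pos k) key

/-- for integers `p,q ≥ 1`, with `m = |p-q|` and `ν = min{p,q} - 1`,
`φ^{(p,q)}(ζ) = ((-1)^{q+ν+1}/q)(1-ζζ̄)ζ^{m+ν-q+1}ζ̄^{m+ν-p+1}
  Σ_{j=0}^{ν} (-1)^j ((j+ν+m+1)!/(j!(j+m)!(ν-j)!))(ζζ̄)^j`. -/
theorem statement4 (p q : ℕ) (hp : 1 ≤ p) (hq : 1 ≤ q) (m ν : ℕ)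
    (hm : m = max p q - min p q) (hν : ν = min p q - 1) (ζ : ℂ) :
    scatteringPhi p q ζ =
      ((-1 : ℂ) ^ (q + ν + 1) / (q : ℂ)) * (1 - ζ * (starRingEnd ℂ) ζ)
        * ζ ^ (m + ν + 1 - q) * ((starRingEnd ℂ) ζ) ^ (m + ν + 1 - p)
        * ∑ j ∈ Finset.range (ν + 1),
            (-1 : ℂ) ^ j
              * ((Nat.factorial (j + ν + m + 1) : ℂ) /
                  ((Nat.factorial j : ℂ) * (Nat.factorial (j + m) : ℂ)
                    * (Nat.factorial (ν - j) : ℂ)))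
              * (ζ * (starRingEnd ℂ) ζ) ^ j := by
  have hmm : min p q + max p q = p + q := by omega
  have hM : max p q = m + ν + 1 := by omega
  rw [scatteringPhi, if_pos ⟨by exact_mod_cast hp, by exact_mod_cast hq⟩]
  simp only [Int.toNat_natCast]
  rw [scatteringD_eq, map_sum]
  simp only [eval_mul, eval_C, eval_pow, eval_X]
  norm_num
  rw [show p+q-1+1 = (m+ν+1)+(ν+1) from by omega, Finset.sum_range_add]
  have hz : ∑ x ∈ range (m + ν + 1),
      (-1:ℂ) ^ x * ((p + q - 1).choose x : ℂ) * (x.descFactorial q : ℂ) * (x.descFactorial p : ℂ) *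
        (ζ ^ (x - q) * (starRingEnd ℂ) ζ ^ (x - p)) = 0 := by
    refine Finset.sum_eq_zero fun x hx => ?_
    have hx' : x < max p q := by simpa [hM] using Finset.mem_range.mp hx
    rcases lt_max_iff.mp hx' with h | h
    · rw [Nat.descFactorial_of_lt h]; push_cast; ring
    · rw [Nat.descFactorial_of_lt h]; push_cast; ring
  rw [hz, zero_add, Finset.mul_sum, Finset.mul_sum]
  refine Finset.sum_congr rfl fun j hj => ?_
  have hjν : j ≤ ν := by have := Finset.mem_range.mp hj; omega
  rw [show j + ν + m + 1 = m + ν + 1 + j from by omega]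
  have hfq : ζ ^ (m + ν + 1 + j - q) = ζ ^ (m + ν + 1 - q) * ζ ^ j := by
    rw [← pow_add]; congr 1; omega
  have hfp : (starRingEnd ℂ) ζ ^ (m + ν + 1 + j - p)
      = (starRingEnd ℂ) ζ ^ (m + ν + 1 - p) * (starRingEnd ℂ) ζ ^ j := by
    rw [← pow_add]; congr 1; omega
  have hs : (-1:ℂ) ^ (m + ν + 1 + j) * (-1:ℂ) ^ p = (-1:ℂ) ^ (q + ν + 1) * (-1:ℂ) ^ j := by
    rw [← pow_add, ← pow_add, show (m+ν+1+j)+p = ((q+ν+1)+j) + 2*(p - min p q) from by omega,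
      pow_add, pow_mul]
    norm_num
  have hfac : ((p+q-1).choose (m+ν+1+j) : ℂ) * ((m+ν+1+j).descFactorial q : ℂ)
      * ((m+ν+1+j).descFactorial p : ℂ)
      * ((j.factorial : ℂ) * ((j+m).factorial : ℂ) * ((ν-j).factorial : ℂ))
      = ((p+q-1).factorial : ℂ) * ((m+ν+1+j).factorial : ℂ) := by
    exact_mod_cast nat_fact_id p q m ν j hp hq hm hν hjν
  have h0 : (q:ℂ) ≠ 0 := Nat.cast_ne_zero.mpr (by omega)
  have h1 : ((p+q-1).factorial : ℂ) ≠ 0 := Nat.cast_ne_zero.mpr (Nat.factorial_ne_zero _)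
  have h2 : (j.factorial : ℂ) ≠ 0 := Nat.cast_ne_zero.mpr (Nat.factorial_ne_zero _)
  have h3 : ((j+m).factorial : ℂ) ≠ 0 := Nat.cast_ne_zero.mpr (Nat.factorial_ne_zero _)
  have h4 : ((ν-j).factorial : ℂ) ≠ 0 := Nat.cast_ne_zero.mpr (Nat.factorial_ne_zero _)
  rw [hfq, hfp]
  field_simp
  linear_combination
    ((1 - ζ * (starRingEnd ℂ) ζ) * ζ^(m+ν+1-q) * ζ^j * ((starRingEnd ℂ) ζ)^(m+ν+1-p)
        * ((starRingEnd ℂ) ζ)^j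
      * (((p + q - 1).choose (m+ν+1+j) : ℂ) * ((m+ν+1+j).descFactorial q : ℂ)
          * ((m+ν+1+j).descFactorial p : ℂ)
          * ((j.factorial : ℂ) * ((j+m).factorial : ℂ) * ((ν-j).factorial : ℂ)))) * hs
    + ((-1:ℂ)^(q+ν+1) * (-1:ℂ)^j * (1 - ζ * (starRingEnd ℂ) ζ) * ζ^(m+ν+1-q) * ζ^j
        * ((starRingEnd ℂ) ζ)^(m+ν+1-p) * ((starRingEnd ℂ) ζ)^j) * hfac
end

section
/- Let p,q,p′,q′ be integers ≥ 1 with p - q ≠ p′ - q′. Then the function ζ ↦ φ^{(p,q)}(ζ) · conj(φ^{(p′,q′)}(ζ)) · 4/(1-|ζ|²) is Lebesgue-integrable on the open unit disk in ℂ, and its integral over the open unit disk equals 0; that is, φ^{(p,q)} and φ^{(p′,q′)} are orthogonal in L² of the disk with respect to the measure 4 dx dy/(1-x²-y²). -/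
open MeasureTheory

namespace Statement5Aux

open MvPolynomial

/-- The substitution `X 0 ↦ u • X 0`, `X 1 ↦ w • X 1`. -/
noncomputable def rf (u w : ℂ) : Fin 2 → MvPolynomial (Fin 2) ℂ :=
  fun j => C (![u, w] j) * X j

lemma pderiv_bind₁ (u w : ℂ) (i : Fin 2) (P : MvPolynomial (Fin 2) ℂ) :
    pderiv i (bind₁ (rf u w) P) = C (![u, w] i) * bind₁ (rf u w) (pderiv i P) := by
  induction P using MvPolynomial.induction_on with
  | C a => simp
  | add p q hp hq => simp only [map_add, hp, hq, mul_add]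
  | mul_X p j ih =>
      rcases eq_or_ne j i with rfl | hji
      · simp only [map_mul, bind₁_X_right, rf, pderiv_mul, pderiv_C_mul, pderiv_X_self,
          mul_one, map_add, ih, pderiv_C, mul_zero, add_zero]
        ring
      · simp only [map_mul, bind₁_X_right, rf, pderiv_mul, pderiv_C_mul, pderiv_X_of_ne hji,
          mul_zero, add_zero, map_add, map_zero, ih, pderiv_C]
        ring

lemma bind₁_pderiv (u w d : ℂ) (i : Fin 2) (h : d * ![u, w] i = 1)
    (P : MvPolynomial (Fin 2) ℂ) :
    bind₁ (rf u w) (pderiv i P) = C d * pderiv i (bind₁ (rf u w) P) := by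
  rw [pderiv_bind₁ u w i P, ← mul_assoc, ← C_mul, h, C_1, one_mul]

lemma bind₁_iter_pderiv (u w d : ℂ) (i : Fin 2) (h : d * ![u, w] i = 1) (n : ℕ)
    (P : MvPolynomial (Fin 2) ℂ) :
    bind₁ (rf u w) ((fun Q => pderiv i Q)^[n] P)
      = C (d ^ n) * (fun Q => pderiv i Q)^[n] (bind₁ (rf u w) P) := by
  induction n with
  | zero => simp
  | succ n ih =>
      simp only [Function.iterate_succ_apply']
      rw [bind₁_pderiv u w d i h, ih, pderiv_C_mul, pow_succ, C_mul]
      ring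

lemma iter_pderiv_C_mul (a : ℂ) (i : Fin 2) (n : ℕ) (P : MvPolynomial (Fin 2) ℂ) :
    (fun Q => pderiv i Q)^[n] (C a * P) = C a * (fun Q => pderiv i Q)^[n] P := by
  induction n with
  | zero => rfl
  | succ n ih => simp only [Function.iterate_succ_apply', ih, pderiv_C_mul]

lemma bind₁_base (u w : ℂ) (h : u * w = 1) (n : ℕ) :
    bind₁ (rf u w) ((1 - X 0 * X 1 : MvPolynomial (Fin 2) ℂ) ^ n)
      = (1 - X 0 * X 1) ^ n := by
  have hmul : rf u w 0 * rf u w 1 = X 0 * X 1 := by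
    simp only [rf, Matrix.cons_val_zero, Matrix.cons_val_one, Matrix.head_cons]
    rw [mul_mul_mul_comm, ← C_mul, h, C_1, one_mul]
  rw [map_pow, map_sub, map_one, map_mul, bind₁_X_right, bind₁_X_right, hmul]

lemma eval_eq_aeval (g : Fin 2 → ℂ) (P : MvPolynomial (Fin 2) ℂ) :
    eval g P = aeval g P := by
  rw [aeval_eq_eval₂Hom]
  rfl

lemma scatteringD_rot (P Q : ℕ) (u w ζ η : ℂ) (h : u * w = 1) :
    MvPolynomial.eval (fun i : Fin 2 => if i = 0 then u * ζ else w * η) (scatteringD P Q)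
      = u ^ P * w ^ Q *
        MvPolynomial.eval (fun i : Fin 2 => if i = 0 then ζ else η) (scatteringD P Q) := by
  have hw : w * u = 1 := by rw [mul_comm]; exact h
  have h1 : u * ![u, w] (1 : Fin 2) = 1 := by simpa using h
  have h0 : w * ![u, w] (0 : Fin 2) = 1 := by simpa using hw
  have hb : bind₁ (rf u w) (scatteringD P Q) = C (u ^ P * w ^ Q) * scatteringD P Q := by
    unfold scatteringD
    rw [bind₁_iter_pderiv u w u 1 h1, bind₁_iter_pderiv u w w 0 h0, bind₁_base u w h,
      iter_pderiv_C_mul, ← mul_assoc, ← C_mul]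
  have hfun : (fun i : Fin 2 => aeval (fun i : Fin 2 => if i = 0 then ζ else η) (rf u w i))
      = fun i : Fin 2 => if i = 0 then u * ζ else w * η := by
    funext i
    fin_cases i <;> simp [rf]
  calc eval (fun i : Fin 2 => if i = 0 then u * ζ else w * η) (scatteringD P Q)
      = aeval (fun i : Fin 2 => if i = 0 then u * ζ else w * η) (scatteringD P Q) :=
        eval_eq_aeval _ _
    _ = aeval (fun i : Fin 2 => aeval (fun i : Fin 2 => if i = 0 then ζ else η) (rf u w i))
          (scatteringD P Q) := by rw [hfun]
    _ = aeval (fun i : Fin 2 => if i = 0 then ζ else η) (bind₁ (rf u w) (scatteringD P Q)) :=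
        (aeval_bind₁ _ _ _).symm
    _ = u ^ P * w ^ Q * eval (fun i : Fin 2 => if i = 0 then ζ else η) (scatteringD P Q) := by
        rw [hb, map_mul, aeval_C, eval_eq_aeval]
        simp

lemma phi_eq (p q : ℤ) (hpq : 1 ≤ p ∧ 1 ≤ q) (ζ : ℂ) :
    scatteringPhi p q ζ
      = ((-1 : ℂ) ^ p.toNat / ((q : ℂ) * (Nat.factorial (p.toNat + q.toNat - 1) : ℂ)))
        * (1 - ζ * (starRingEnd ℂ) ζ)
        * MvPolynomial.eval (fun i : Fin 2 => if i = 0 then ζ else (starRingEnd ℂ) ζ)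
            (scatteringD p.toNat q.toNat) := by
  rw [scatteringPhi, if_pos hpq]

lemma phi_rot (p q : ℤ) (hpq : 1 ≤ p ∧ 1 ≤ q) (u ζ : ℂ)
    (h : u * (starRingEnd ℂ) u = 1) :
    scatteringPhi p q (u * ζ)
      = u ^ p.toNat * ((starRingEnd ℂ) u) ^ q.toNat * scatteringPhi p q ζ := by
  rw [phi_eq p q hpq (u * ζ), phi_eq p q hpq ζ]
  have hc : (starRingEnd ℂ) (u * ζ) = (starRingEnd ℂ) u * (starRingEnd ℂ) ζ := map_mul _ _ _
  rw [hc]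
  have h1 : 1 - u * ζ * ((starRingEnd ℂ) u * (starRingEnd ℂ) ζ)
      = 1 - ζ * (starRingEnd ℂ) ζ := by
    rw [show u * ζ * ((starRingEnd ℂ) u * (starRingEnd ℂ) ζ)
        = (u * (starRingEnd ℂ) u) * (ζ * (starRingEnd ℂ) ζ) by ring, h, one_mul]
  rw [h1, scatteringD_rot p.toNat q.toNat u ((starRingEnd ℂ) u) ζ ((starRingEnd ℂ) ζ) h]
  ring

end Statement5Aux

open Statement5Aux in
/-- for integers `p,q,p′,q′ ≥ 1` with `p - q ≠ p′ - q′`, the function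
`ζ ↦ φ^{(p,q)}(ζ)·conj(φ^{(p′,q′)}(ζ))·4/(1-|ζ|²)` is Lebesgue-integrable on the open
unit disk and its integral there is `0`: the scattering polynomials `φ^{(p,q)}` and
`φ^{(p′,q′)}` are orthogonal in `L²(𝔻, 4dxdy/(1-x²-y²))`. -/
theorem statement5 (p q p' q' : ℤ) (hp : 1 ≤ p) (hq : 1 ≤ q) (hp' : 1 ≤ p') (hq' : 1 ≤ q')
    (hne : p - q ≠ p' - q') :
    IntegrableOn (fun ζ : ℂ => scatteringPhi p q ζ * (starRingEnd ℂ) (scatteringPhi p' q' ζ)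
        * ((4 / (1 - ‖ζ‖ ^ 2) : ℝ) : ℂ)) (Metric.ball (0 : ℂ) 1) volume ∧
    ∫ ζ in Metric.ball (0 : ℂ) 1,
        scatteringPhi p q ζ * (starRingEnd ℂ) (scatteringPhi p' q' ζ)
          * ((4 / (1 - ‖ζ‖ ^ 2) : ℝ) : ℂ) = 0 := by
  classical
  set F : ℂ → ℂ := fun ζ : ℂ => scatteringPhi p q ζ * (starRingEnd ℂ) (scatteringPhi p' q' ζ)
      * ((4 / (1 - ‖ζ‖ ^ 2) : ℝ) : ℂ) with hF
  -- notation
  set c1 : ℂ := ((-1 : ℂ) ^ p.toNat / ((q : ℂ) * (Nat.factorial (p.toNat + q.toNat - 1) : ℂ)))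
    with hc1
  set c2 : ℂ := ((-1 : ℂ) ^ p'.toNat /
    ((q' : ℂ) * (Nat.factorial (p'.toNat + q'.toNat - 1) : ℂ))) with hc2
  set D1 : ℂ → ℂ := fun ζ =>
    MvPolynomial.eval (fun i : Fin 2 => if i = 0 then ζ else (starRingEnd ℂ) ζ)
      (scatteringD p.toNat q.toNat) with hD1
  set D2 : ℂ → ℂ := fun ζ =>
    MvPolynomial.eval (fun i : Fin 2 => if i = 0 then ζ else (starRingEnd ℂ) ζ)
      (scatteringD p'.toNat q'.toNat) with hD2
  have hPhiEq : ∀ ζ : ℂ, scatteringPhi p q ζ = c1 * (1 - ζ * (starRingEnd ℂ) ζ) * D1 ζ := by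
    intro ζ
    simp only [hc1, hD1]
    exact phi_eq p q ⟨hp, hq⟩ ζ
  have hPhiEq' : ∀ ζ : ℂ, scatteringPhi p' q' ζ = c2 * (1 - ζ * (starRingEnd ℂ) ζ) * D2 ζ := by
    intro ζ
    simp only [hc2, hD2]
    exact phi_eq p' q' ⟨hp', hq'⟩ ζ
  -- continuity
  have hcontD : ∀ P : MvPolynomial (Fin 2) ℂ, Continuous (fun ζ : ℂ =>
      MvPolynomial.eval (fun i : Fin 2 => if i = 0 then ζ else (starRingEnd ℂ) ζ) P) := by
    intro P
    refine (MvPolynomial.continuous_eval P).comp (continuous_pi fun i => ?_)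
    rcases eq_or_ne i 0 with rfl | hi
    · simpa using continuous_id'
    · simpa [hi] using Complex.continuous_conj
  -- the continuous representative
  set G : ℂ → ℂ := fun ζ => c1 * (starRingEnd ℂ) c2 * (D1 ζ * (starRingEnd ℂ) (D2 ζ))
      * ((4 * (1 - ‖ζ‖ ^ 2) : ℝ) : ℂ) with hG
  have hGcont : Continuous G := by
    apply Continuous.mul
    · exact continuous_const.mul ((hcontD _).mul (Complex.continuous_conj.comp (hcontD _)))
    · exact Complex.continuous_ofReal.comp
        (continuous_const.mul (continuous_const.sub (continuous_norm.pow 2)))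
  have hz : ∀ ζ : ℂ, (1 : ℂ) - ζ * (starRingEnd ℂ) ζ = ((1 - ‖ζ‖ ^ 2 : ℝ) : ℂ) := by
    intro ζ
    rw [Complex.mul_conj, ← Complex.sq_norm]
    push_cast
    ring
  have hEqOn : Set.EqOn G F (Metric.ball (0 : ℂ) 1) := by
    intro ζ hζ
    have hζ1 : ‖ζ‖ < 1 := by
      simpa [Complex.dist_eq] using hζ
    have hr : (0 : ℝ) < 1 - ‖ζ‖ ^ 2 := by
      nlinarith [norm_nonneg ζ]
    have hrne : (1 : ℂ) - (‖ζ‖ : ℂ) ^ 2 ≠ 0 := by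
      have h0 : ((1 - ‖ζ‖ ^ 2 : ℝ) : ℂ) ≠ 0 := Complex.ofReal_ne_zero.mpr hr.ne'
      push_cast at h0
      exact h0
    simp only [hF, hG, hPhiEq, hPhiEq', hz ζ, map_mul, Complex.conj_ofReal]
    push_cast
    field_simp
  have hGint : IntegrableOn G (Metric.ball (0 : ℂ) 1) volume :=
    (hGcont.continuousOn.integrableOn_compact (isCompact_closedBall (0 : ℂ) 1)).mono_set
      Metric.ball_subset_closedBall
  have hFint : IntegrableOn F (Metric.ball (0 : ℂ) 1) volume :=
    hGint.congr_fun hEqOn measurableSet_ball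
  refine ⟨hFint, ?_⟩
  -- rotation argument
  set m : ℤ := (p - q) - (p' - q') with hm
  have hm0 : m ≠ 0 := sub_ne_zero.mpr hne
  have hmR : (m : ℝ) ≠ 0 := Int.cast_ne_zero.mpr hm0
  set θ : ℝ := Real.pi / (m : ℝ) with hθ
  set u : Circle := Circle.exp θ with hu
  have hucoe : (u : ℂ) = Complex.exp (θ * Complex.I) := Circle.coe_exp θ
  have habs : ‖(u : ℂ)‖ = 1 := Circle.norm_coe u
  have hmul1 : (u : ℂ) * (starRingEnd ℂ) (u : ℂ) = 1 := by
    rw [Complex.mul_conj, ← Complex.sq_norm, habs]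
    norm_num
  have hconj : (starRingEnd ℂ) (u : ℂ) = Complex.exp (-(θ * Complex.I)) := by
    rw [hucoe, ← Complex.exp_conj]
    congr 1
    simp [Complex.conj_ofReal]
  have htop : (p.toNat : ℤ) = p := Int.toNat_of_nonneg (by linarith)
  have htoq : (q.toNat : ℤ) = q := Int.toNat_of_nonneg (by linarith)
  have htop' : (p'.toNat : ℤ) = p' := Int.toNat_of_nonneg (by linarith)
  have htoq' : (q'.toNat : ℤ) = q' := Int.toNat_of_nonneg (by linarith)
  have hfactor : (u : ℂ) ^ (p.toNat + q'.toNat) * ((starRingEnd ℂ) (u : ℂ)) ^ (q.toNat + p'.toNat)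
      = -1 := by
    rw [hconj, hucoe, ← Complex.exp_nat_mul, ← Complex.exp_nat_mul, ← Complex.exp_add]
    have harg : ((p.toNat + q'.toNat : ℕ) : ℂ) * (θ * Complex.I)
        + ((q.toNat + p'.toNat : ℕ) : ℂ) * -(θ * Complex.I)
        = ((Real.pi : ℂ)) * Complex.I := by
      have hsum : (((p.toNat + q'.toNat : ℕ) : ℝ) - ((q.toNat + p'.toNat : ℕ) : ℝ)) * θ
          = Real.pi := by
        have hpR : ((p.toNat : ℝ)) = ((p : ℤ) : ℝ) := by exact_mod_cast htop
        have hqR : ((q.toNat : ℝ)) = ((q : ℤ) : ℝ) := by exact_mod_cast htoq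
        have hpR' : ((p'.toNat : ℝ)) = ((p' : ℤ) : ℝ) := by exact_mod_cast htop'
        have hqR' : ((q'.toNat : ℝ)) = ((q' : ℤ) : ℝ) := by exact_mod_cast htoq'
        have : (((p.toNat + q'.toNat : ℕ) : ℝ) - ((q.toNat + p'.toNat : ℕ) : ℝ)) = (m : ℝ) := by
          rw [hm]
          push_cast [hpR, hqR, hpR', hqR']
          ring
        rw [this, hθ]
        field_simp
      calc ((p.toNat + q'.toNat : ℕ) : ℂ) * (θ * Complex.I)
          + ((q.toNat + p'.toNat : ℕ) : ℂ) * -(θ * Complex.I)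
          = ((((p.toNat + q'.toNat : ℕ) : ℝ) - ((q.toNat + p'.toNat : ℕ) : ℝ)) * θ : ℝ)
            * Complex.I := by push_cast; ring
        _ = ((Real.pi : ℂ)) * Complex.I := by rw [hsum]
    rw [harg, Complex.exp_pi_mul_I]
  have key : ∀ ζ : ℂ, F ((u : ℂ) * ζ) = -F ζ := by
    intro ζ
    have habs2 : ‖(u : ℂ) * ζ‖ = ‖ζ‖ := by
      rw [norm_mul, habs, one_mul]
    simp only [hF]
    rw [phi_rot p q ⟨hp, hq⟩ (u : ℂ) ζ hmul1, phi_rot p' q' ⟨hp', hq'⟩ (u : ℂ) ζ hmul1, habs2]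
    simp only [map_mul, map_pow, Complex.conj_conj]
    have expand : (u : ℂ) ^ p.toNat * ((starRingEnd ℂ) (u : ℂ)) ^ q.toNat *
        scatteringPhi p q ζ *
        (((starRingEnd ℂ) (u : ℂ)) ^ p'.toNat * (u : ℂ) ^ q'.toNat *
          (starRingEnd ℂ) (scatteringPhi p' q' ζ)) *
        ((4 / (1 - ‖ζ‖ ^ 2) : ℝ) : ℂ)
        = ((u : ℂ) ^ (p.toNat + q'.toNat) *
            ((starRingEnd ℂ) (u : ℂ)) ^ (q.toNat + p'.toNat)) *
          (scatteringPhi p q ζ * (starRingEnd ℂ) (scatteringPhi p' q' ζ) *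
            ((4 / (1 - ‖ζ‖ ^ 2) : ℝ) : ℂ)) := by
      rw [pow_add, pow_add]; ring
    rw [expand, hfactor]
    ring
  -- rotation preserves ball and volume
  have hpre : (rotation u) ⁻¹' (Metric.ball (0 : ℂ) 1) = Metric.ball (0 : ℂ) 1 := by
    ext z
    simp only [Set.mem_preimage, Metric.mem_ball, Complex.dist_eq, sub_zero,
      rotation_apply, norm_mul, habs, one_mul]
  have hMP : MeasurePreserving (rotation u) volume volume :=
    (rotation u).measurePreserving
  have hEmb : MeasurableEmbedding (rotation u) :=
    (rotation u).toHomeomorph.measurableEmbedding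
  have hchg : ∫ ζ in Metric.ball (0 : ℂ) 1, F ((rotation u) ζ)
      = ∫ ζ in Metric.ball (0 : ℂ) 1, F ζ := by
    have h := hMP.setIntegral_preimage_emb hEmb F (Metric.ball (0 : ℂ) 1)
    rwa [hpre] at h
  have hI : ∫ ζ in Metric.ball (0 : ℂ) 1, F ζ = -∫ ζ in Metric.ball (0 : ℂ) 1, F ζ := by
    calc ∫ ζ in Metric.ball (0 : ℂ) 1, F ζ
        = ∫ ζ in Metric.ball (0 : ℂ) 1, F ((rotation u) ζ) := hchg.symm
      _ = ∫ ζ in Metric.ball (0 : ℂ) 1, -F ζ := by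
          simp only [rotation_apply, key]
      _ = -∫ ζ in Metric.ball (0 : ℂ) 1, F ζ := integral_neg _
  have h2 : (2 : ℂ) * ∫ ζ in Metric.ball (0 : ℂ) 1, F ζ = 0 := by
    linear_combination hI
  have := mul_eq_zero.mp h2
  rcases this with h | h
  · norm_num at h
  · exact h
end

section
/- For every positive integer λ, the family of functions obtained by restricting the scattering polynomials φ^{(p,q)} to the open unit disk, indexed by the pairs of integers (p,q) with p ≥ 1, q ≥ 1 and pq = λ, is linearly independent over ℂ. (In particular this family has as many members as λ has divisors.) -/
open MvPolynomial

/-- "charge" homogeneity: every monomial has X-degree minus Y-degree equal to d. -/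
def MyHom (P : MvPolynomial (Fin 2) ℂ) (d : ℤ) : Prop :=
  ∀ m : Fin 2 →₀ ℕ, MvPolynomial.coeff m P ≠ 0 → (m 0 : ℤ) - (m 1 : ℤ) = d

lemma myHom_one : MyHom 1 0 := by
  intro m hm
  rw [MvPolynomial.coeff_one] at hm
  have : (0 : Fin 2 →₀ ℕ) = m := by by_contra h; simp [h] at hm
  simp [← this]

lemma MyHom.sub {P Q : MvPolynomial (Fin 2) ℂ} {d : ℤ} (hP : MyHom P d) (hQ : MyHom Q d) :
    MyHom (P - Q) d := by
  intro m hm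
  rw [MvPolynomial.coeff_sub] at hm
  rcases ne_or_eq (MvPolynomial.coeff m P) 0 with h | h
  · exact hP m h
  · exact hQ m (by rw [h] at hm; simpa using hm)

lemma MyHom.mul {P Q : MvPolynomial (Fin 2) ℂ} {c d : ℤ} (hP : MyHom P c) (hQ : MyHom Q d) :
    MyHom (P * Q) (c + d) := by
  intro m hm
  rw [MvPolynomial.coeff_mul] at hm
  obtain ⟨x, hx, hne⟩ := Finset.exists_ne_zero_of_sum_ne_zero hm
  rw [Finset.HasAntidiagonal.mem_antidiagonal] at hx
  have h1 := hP x.1 (left_ne_zero_of_mul hne)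
  have h2 := hQ x.2 (right_ne_zero_of_mul hne)
  have e0 : m 0 = x.1 0 + x.2 0 := by rw [← hx]; rfl
  have e1 : m 1 = x.1 1 + x.2 1 := by rw [← hx]; rfl
  rw [e0, e1]; push_cast; omega

lemma MyHom.pow {P : MvPolynomial (Fin 2) ℂ} {d : ℤ} (hP : MyHom P d) (n : ℕ) :
    MyHom (P ^ n) (n * d) := by
  induction n with
  | zero => simpa using myHom_one
  | succ k ih =>
    have h := ih.mul hP
    have e : ((k + 1 : ℕ) : ℤ) * d = (k : ℤ) * d + d := by push_cast; ring
    rw [pow_succ, e]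
    exact h

lemma myHom_XY : MyHom (MvPolynomial.X 0 * MvPolynomial.X 1) 0 := by
  intro m hm
  rw [show (MvPolynomial.X 0 * MvPolynomial.X 1 : MvPolynomial (Fin 2) ℂ)
      = MvPolynomial.monomial (Finsupp.single 0 1 + Finsupp.single (1:Fin 2) (1:ℕ)) 1 by
      rw [MvPolynomial.X, MvPolynomial.X, MvPolynomial.monomial_mul, one_mul],
    MvPolynomial.coeff_monomial] at hm
  have : Finsupp.single 0 1 + Finsupp.single 1 1 = m := by by_contra h; simp [h] at hm
  rw [← this]
  simp [Finsupp.add_apply, Finsupp.single_apply]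

lemma myHom_base (n : ℕ) : MyHom ((1 - MvPolynomial.X 0 * MvPolynomial.X 1) ^ n) 0 := by
  have := (myHom_one.sub myHom_XY).pow n
  simpa using this

lemma coeff_pderiv' (i : Fin 2) (m : Fin 2 →₀ ℕ) (P : MvPolynomial (Fin 2) ℂ) :
    MvPolynomial.coeff m (MvPolynomial.pderiv i P) =
      ((m i : ℂ) + 1) * MvPolynomial.coeff (m + Finsupp.single i 1) P := by
  induction P using MvPolynomial.induction_on' with
  | add p q hp hq => simp [coeff_add, hp, hq]; ring
  | monomial s a =>
    rw [pderiv_monomial, coeff_monomial, coeff_monomial]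
    rcases Nat.eq_zero_or_pos (s i) with hsi | hsi
    · have h2 : s ≠ m + Finsupp.single i 1 := by
        intro h; rw [h] at hsi; simp at hsi
      rw [if_neg h2, mul_zero]
      split_ifs with h1
      · simp [hsi]
      · rfl
    · have key : s - Finsupp.single i 1 = m ↔ s = m + Finsupp.single i 1 := by
        constructor
        · intro h
          ext j
          have h1 := DFunLike.congr_fun h j
          rw [Finsupp.tsub_apply] at h1
          rw [Finsupp.add_apply]
          rcases eq_or_ne j i with rfl | hj
          · rw [Finsupp.single_eq_same] at h1 ⊢; omega
          · rw [Finsupp.single_eq_of_ne hj] at h1 ⊢; omega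
        · intro h; rw [h]; ext j
          rw [Finsupp.tsub_apply, Finsupp.add_apply]
          rcases eq_or_ne j i with rfl | hj
          · simp
          · simp [Finsupp.single_apply, hj]
      split_ifs with h1 h2 h2
      · have : s i = m i + 1 := by rw [key.mp h1]; simp
        rw [this]; push_cast; ring
      · exact absurd (key.mp h1) h2
      · exact absurd (key.mpr h2) h1
      · rw [mul_zero]

lemma MyHom.pderiv0 {P : MvPolynomial (Fin 2) ℂ} {d : ℤ} (hP : MyHom P d) :
    MyHom (MvPolynomial.pderiv 0 P) (d - 1) := by
  intro m hm
  rw [coeff_pderiv'] at hm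
  have h := hP _ (right_ne_zero_of_mul hm)
  have e0 : (m + Finsupp.single (0:Fin 2) (1:ℕ)) 0 = m 0 + 1 := by simp
  have e1 : (m + Finsupp.single (0:Fin 2) (1:ℕ)) 1 = m 1 := by
    simp [Finsupp.add_apply, Finsupp.single_apply]
  rw [e0, e1] at h; push_cast at h; omega

lemma MyHom.pderiv1 {P : MvPolynomial (Fin 2) ℂ} {d : ℤ} (hP : MyHom P d) :
    MyHom (MvPolynomial.pderiv 1 P) (d + 1) := by
  intro m hm
  rw [coeff_pderiv'] at hm
  have h := hP _ (right_ne_zero_of_mul hm)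
  have e1 : (m + Finsupp.single (1:Fin 2) (1:ℕ)) 1 = m 1 + 1 := by simp
  have e0 : (m + Finsupp.single (1:Fin 2) (1:ℕ)) 0 = m 0 := by
    simp [Finsupp.add_apply, Finsupp.single_apply]
  rw [e0, e1] at h; push_cast at h; omega

lemma MyHom.iter0 {P : MvPolynomial (Fin 2) ℂ} {d : ℤ} (hP : MyHom P d) (j : ℕ) :
    MyHom ((fun Q => MvPolynomial.pderiv (0 : Fin 2) Q)^[j] P) (d - j) := by
  induction j generalizing P d with
  | zero => simpa using hP
  | succ k ih =>
    rw [Function.iterate_succ_apply]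
    have := ih hP.pderiv0
    have e : d - 1 - k = d - (k + 1 : ℕ) := by push_cast; ring
    rwa [e] at this

lemma MyHom.iter1 {P : MvPolynomial (Fin 2) ℂ} {d : ℤ} (hP : MyHom P d) (j : ℕ) :
    MyHom ((fun Q => MvPolynomial.pderiv (1 : Fin 2) Q)^[j] P) (d + j) := by
  induction j generalizing P d with
  | zero => simpa using hP
  | succ k ih =>
    rw [Function.iterate_succ_apply]
    have := ih hP.pderiv1
    have e : d + 1 + k = d + (k + 1 : ℕ) := by push_cast; ring
    rwa [e] at this

lemma coeff_diag_pow (k n : ℕ) :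
    MvPolynomial.coeff (Finsupp.single (0:Fin 2) n + Finsupp.single (1:Fin 2) n)
      ((MvPolynomial.X 0 * MvPolynomial.X 1 : MvPolynomial (Fin 2) ℂ) ^ k) =
      if k = n then 1 else 0 := by
  rw [mul_pow, MvPolynomial.X_pow_eq_monomial, MvPolynomial.X_pow_eq_monomial,
    MvPolynomial.monomial_mul, one_mul, MvPolynomial.coeff_monomial]
  have hiff : (Finsupp.single (0:Fin 2) k + Finsupp.single (1:Fin 2) k =
      Finsupp.single (0:Fin 2) n + Finsupp.single (1:Fin 2) n) ↔ k = n := by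
    constructor
    · intro h
      have := DFunLike.congr_fun h 0
      simpa using this
    · rintro rfl; rfl
  split_ifs with h1 h2 h2
  · rfl
  · exact absurd (hiff.mp h1) h2
  · exact absurd (hiff.mpr h2) h1
  · rfl

lemma coeff_base (n : ℕ) :
    MvPolynomial.coeff (Finsupp.single (0:Fin 2) n + Finsupp.single (1:Fin 2) n)
      ((1 - MvPolynomial.X 0 * MvPolynomial.X 1 : MvPolynomial (Fin 2) ℂ) ^ n) = (-1) ^ n := by
  have h : (1 - MvPolynomial.X 0 * MvPolynomial.X 1 : MvPolynomial (Fin 2) ℂ)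
      = (-(MvPolynomial.X 0 * MvPolynomial.X 1)) + 1 := by ring
  rw [h, add_pow, MvPolynomial.coeff_sum]
  have key : ∀ k : ℕ, ((-(MvPolynomial.X 0 * MvPolynomial.X 1)) ^ k * 1 ^ (n - k) *
        (n.choose k : MvPolynomial (Fin 2) ℂ))
      = MvPolynomial.C ((-1 : ℂ) ^ k * (n.choose k : ℂ)) *
        (MvPolynomial.X 0 * MvPolynomial.X 1) ^ k := by
    intro k
    rw [neg_pow, one_pow, mul_one, map_mul, map_pow, map_neg, map_one, map_natCast]
    ring
  rw [Finset.sum_congr rfl fun k _ => congrArg _ (key k)]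
  simp only [MvPolynomial.coeff_C_mul, coeff_diag_pow]
  rw [Finset.sum_eq_single n]
  · simp
  · intro k hk hkn; simp [hkn]
  · intro h; exact absurd (Finset.self_mem_range_succ n) h



lemma iter0_ne (a b j : ℕ) :
    ∀ P : MvPolynomial (Fin 2) ℂ,
    MvPolynomial.coeff (Finsupp.single (0:Fin 2) (a + j) + Finsupp.single (1:Fin 2) b) P ≠ 0 →
    MvPolynomial.coeff (Finsupp.single (0:Fin 2) a + Finsupp.single (1:Fin 2) b)
      ((fun Q => MvPolynomial.pderiv (0 : Fin 2) Q)^[j] P) ≠ 0 := by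
  induction j generalizing a with
  | zero => intro P h; simpa using h
  | succ k ih =>
    intro P h
    rw [Function.iterate_succ_apply]
    apply ih (a := a)
    rw [coeff_pderiv']
    have e : (Finsupp.single (0:Fin 2) (a + k) + Finsupp.single (1:Fin 2) b)
        + Finsupp.single (0:Fin 2) 1
        = Finsupp.single (0:Fin 2) (a + (k+1)) + Finsupp.single (1:Fin 2) b := by
      rw [add_right_comm, ← Finsupp.single_add, Nat.add_assoc]
    rw [e]
    refine mul_ne_zero ?_ h
    have : ((Finsupp.single (0:Fin 2) (a + k) + Finsupp.single (1:Fin 2) b) 0) = a + k := by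
      simp [Finsupp.add_apply, Finsupp.single_apply]
    rw [this]
    exact_mod_cast Nat.cast_add_one_ne_zero (R := ℂ) (a + k)

lemma iter1_ne (a b j : ℕ) :
    ∀ P : MvPolynomial (Fin 2) ℂ,
    MvPolynomial.coeff (Finsupp.single (0:Fin 2) a + Finsupp.single (1:Fin 2) (b + j)) P ≠ 0 →
    MvPolynomial.coeff (Finsupp.single (0:Fin 2) a + Finsupp.single (1:Fin 2) b)
      ((fun Q => MvPolynomial.pderiv (1 : Fin 2) Q)^[j] P) ≠ 0 := by
  induction j generalizing b with
  | zero => intro P h; simpa using h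
  | succ k ih =>
    intro P h
    rw [Function.iterate_succ_apply]
    apply ih (b := b)
    rw [coeff_pderiv']
    have e : (Finsupp.single (0:Fin 2) a + Finsupp.single (1:Fin 2) (b + k))
        + Finsupp.single (1:Fin 2) 1
        = Finsupp.single (0:Fin 2) a + Finsupp.single (1:Fin 2) (b + (k+1)) := by
      rw [add_assoc, ← Finsupp.single_add, Nat.add_assoc]
    rw [e]
    refine mul_ne_zero ?_ h
    have : ((Finsupp.single (0:Fin 2) a + Finsupp.single (1:Fin 2) (b + k)) 1) = b + k := by
      simp [Finsupp.add_apply, Finsupp.single_apply]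
    rw [this]
    exact_mod_cast Nat.cast_add_one_ne_zero (R := ℂ) (b + k)

lemma scatteringD_coeff_ne {p q : ℕ} (hp : 1 ≤ p) (hq : 1 ≤ q) :
    MvPolynomial.coeff (Finsupp.single (0:Fin 2) (p-1) + Finsupp.single (1:Fin 2) (q-1))
      (scatteringD p q) ≠ 0 := by
  have hn : (q - 1) + p = p + q - 1 := by omega
  have hn' : (p - 1) + q = p + q - 1 := by omega
  apply iter1_ne
  rw [hn]
  apply iter0_ne
  rw [hn']
  rw [coeff_base]
  exact pow_ne_zero _ (by norm_num)

lemma scatteringD_hom {p q : ℕ} (hp : 1 ≤ p) (hq : 1 ≤ q) :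
    MyHom (scatteringD p q) ((p : ℤ) - q) := by
  have h := ((myHom_base (p + q - 1)).iter0 q).iter1 p
  have e : (0 : ℤ) - q + p = (p : ℤ) - q := by ring
  rwa [e] at h

lemma eval_scale {P : MvPolynomial (Fin 2) ℂ} {d : ℤ} (hP : MyHom P d)
    {z : ℂ} (hz : z ≠ 0) (a b : ℂ) :
    MvPolynomial.eval (fun i : Fin 2 => if i = 0 then z * a else z⁻¹ * b) P
      = z ^ d * MvPolynomial.eval (fun i : Fin 2 => if i = 0 then a else b) P := by
  rw [MvPolynomial.eval_eq', MvPolynomial.eval_eq', Finset.mul_sum]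
  apply Finset.sum_congr rfl
  intro m hm
  rw [MvPolynomial.mem_support_iff] at hm
  have hd := hP m hm
  rw [Fin.prod_univ_two, Fin.prod_univ_two]
  simp only [if_pos rfl, if_neg (show (1 : Fin 2) ≠ 0 by decide), if_true]
  rw [mul_pow, mul_pow, inv_pow]
  have hzpow : z ^ (m 0) * (z ^ (m 1))⁻¹ = z ^ d := by
    rw [← hd, ← zpow_natCast z (m 0), ← zpow_natCast z (m 1), ← zpow_neg, ← zpow_add₀ hz]
    ring_nf
  field_simp
  rw [← hzpow]
  field_simp

lemma diag_ne_zero {p q : ℕ} (hp : 1 ≤ p) (hq : 1 ≤ q) {P : MvPolynomial (Fin 2) ℂ}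
    (hom : MyHom P ((p : ℤ) - q))
    (hc : MvPolynomial.coeff
      (Finsupp.single (0:Fin 2) (p-1) + Finsupp.single (1:Fin 2) (q-1)) P ≠ 0) :
    ¬ (∀ t : ℝ, t ∈ Set.Ioo (0:ℝ) 1 →
        MvPolynomial.eval (fun _ : Fin 2 => (t : ℂ)) P = 0) := by
  intro hall
  set mstar : Fin 2 →₀ ℕ := Finsupp.single (0:Fin 2) (p-1) + Finsupp.single (1:Fin 2) (q-1)
    with hmstar
  have hm0 : mstar 0 = p - 1 := by simp [hmstar, Finsupp.add_apply, Finsupp.single_apply]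
  have hm1 : mstar 1 = q - 1 := by simp [hmstar, Finsupp.add_apply, Finsupp.single_apply]
  set diag : Polynomial ℂ :=
    MvPolynomial.eval₂ Polynomial.C (fun _ : Fin 2 => Polynomial.X) P with hdiag
  have heval : ∀ x : ℂ, Polynomial.eval x diag = MvPolynomial.eval (fun _ : Fin 2 => x) P := by
    intro x
    rw [hdiag, show (Polynomial.eval x : Polynomial ℂ → ℂ) = (Polynomial.evalRingHom x : Polynomial ℂ → ℂ) by rfl,
      MvPolynomial.eval₂_comp_left (Polynomial.evalRingHom x) Polynomial.C
        (fun _ : Fin 2 => Polynomial.X) P]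
    rw [show (Polynomial.evalRingHom x).comp (Polynomial.C : ℂ →+* Polynomial ℂ)
        = RingHom.id ℂ by ext c; simp]
    rw [show ((Polynomial.evalRingHom x : Polynomial ℂ →+* ℂ) ∘ (fun _ : Fin 2 => Polynomial.X))
        = fun _ : Fin 2 => x by funext i; simp]
    rfl
  have hzero : diag = 0 := by
    apply Polynomial.eq_zero_of_infinite_isRoot
    apply Set.Infinite.mono (s := (fun t : ℝ => (t : ℂ)) '' Set.Ioo 0 1)
    · rintro x ⟨t, ht, rfl⟩
      exact (heval _).trans (hall t ht)
    · exact (Set.Ioo_infinite (by norm_num)).image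
        (Set.injOn_of_injective Complex.ofReal_injective)
  have hco : diag.coeff (p + q - 2) = MvPolynomial.coeff mstar P := by
    rw [hdiag, MvPolynomial.eval₂_eq', Polynomial.finset_sum_coeff]
    have hterm : ∀ m : Fin 2 →₀ ℕ,
        (Polynomial.C (MvPolynomial.coeff m P) *
          ∏ i : Fin 2, Polynomial.X ^ m i).coeff (p + q - 2)
        = MvPolynomial.coeff m P * if p + q - 2 = m 0 + m 1 then 1 else 0 := by
      intro m
      rw [Fin.prod_univ_two, ← pow_add, Polynomial.coeff_C_mul, Polynomial.coeff_X_pow]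
    rw [Finset.sum_congr rfl fun m _ => hterm m]
    rw [Finset.sum_eq_single mstar]
    · rw [hm0, hm1, if_pos (by omega), mul_one]
    · intro m hmem hne
      rcases eq_or_ne (p + q - 2) (m 0 + m 1) with he | he
      · exfalso
        apply hne
        have hhom := hom m (MvPolynomial.mem_support_iff.mp hmem)
        have h0 : m 0 = p - 1 := by omega
        have h1 : m 1 = q - 1 := by omega
        ext j
        fin_cases j
        · exact h0.trans hm0.symm
        · exact h1.trans hm1.symm
      · rw [if_neg he, mul_zero]
    · intro h
      exact absurd (MvPolynomial.mem_support_iff.mpr hc) h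
  rw [hzero] at hco
  exact hc (by rw [← hco]; simp)


lemma phi_rot {p q : ℤ} (hp : 1 ≤ p) (hq : 1 ≤ q) {z : ℂ} (hz : ‖z‖ = 1) (ζ : ℂ) :
    scatteringPhi p q (z * ζ) = z ^ (p - q) * scatteringPhi p q ζ := by
  have hz0 : z ≠ 0 := by
    intro h; rw [h] at hz; simp at hz
  have hconj : (starRingEnd ℂ) z = z⁻¹ := by
    have h1 : z * (starRingEnd ℂ) z = 1 := by
      rw [Complex.mul_conj]
      norm_cast
      rw [Complex.normSq_eq_norm_sq, hz, one_pow]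
    field_simp at h1 ⊢
    linear_combination h1
  have hptn : 1 ≤ p.toNat := by omega
  have hqtn : 1 ≤ q.toNat := by omega
  rw [scatteringPhi, scatteringPhi, if_pos ⟨hp, hq⟩, if_pos ⟨hp, hq⟩]
  have hmid : 1 - (z * ζ) * (starRingEnd ℂ) (z * ζ) = 1 - ζ * (starRingEnd ℂ) ζ := by
    rw [map_mul, hconj]
    field_simp
  rw [hmid]
  have hfun : (fun i : Fin 2 => if i = 0 then z * ζ else (starRingEnd ℂ) (z * ζ))
      = fun i : Fin 2 => if i = 0 then z * ζ else z⁻¹ * ((starRingEnd ℂ) ζ) := by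
    funext i
    rcases eq_or_ne i 0 with rfl | h
    · simp
    · rw [if_neg h, if_neg h, map_mul, hconj]
  rw [hfun, eval_scale (scatteringD_hom hptn hqtn) hz0]
  have hd : ((p.toNat : ℤ) - q.toNat) = p - q := by omega
  rw [hd]
  ring

lemma circle_infinite : {z : ℂ | ‖z‖ = 1}.Infinite := by
  apply Set.Infinite.mono (s := (fun t : ℝ => Complex.exp (t * Complex.I)) '' Set.Ioo 0 1)
  · rintro x ⟨t, _, rfl⟩
    exact Complex.norm_exp_ofReal_mul_I t
  · apply (Set.Ioo_infinite (by norm_num)).image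
    intro a ha b hb hab
    have h1 : Real.cos a = Real.cos b := by
      have h := congrArg Complex.re hab
      rwa [Complex.exp_ofReal_mul_I_re, Complex.exp_ofReal_mul_I_re] at h
    have hpi := Real.pi_gt_three
    exact Real.strictAntiOn_cos.injOn ⟨le_of_lt ha.1, by linarith [ha.2]⟩
      ⟨le_of_lt hb.1, by linarith [hb.2]⟩ h1

lemma dinj {p1 q1 p2 q2 L : ℤ} (hp1 : 1 ≤ p1) (hq1 : 1 ≤ q1) (hp2 : 1 ≤ p2) (hq2 : 1 ≤ q2)
    (h1 : p1 * q1 = L) (h2 : p2 * q2 = L) (hd : p1 - q1 = p2 - q2) : p1 = p2 ∧ q1 = q2 := by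
  have hq2' : q2 = p2 - p1 + q1 := by omega
  rw [hq2'] at h2
  have key : (p2 - p1) * (p2 + q1) = 0 := by linear_combination h2 - h1
  rcases mul_eq_zero.mp key with h | h
  · constructor <;> omega
  · exfalso; omega


/-- for every positive integer `λ`, the family of restrictions to the open
unit disk of the scattering polynomials `φ^{(p,q)}`, indexed by pairs `(p,q)` of integers
with `p ≥ 1`, `q ≥ 1` and `pq = λ`, is linearly independent over `ℂ`. -/
theorem statement6 (lam : ℕ) (hlam : 1 ≤ lam) :
    LinearIndependent ℂ
      (fun i : {pq : ℤ × ℤ // 1 ≤ pq.1 ∧ 1 ≤ pq.2 ∧ pq.1 * pq.2 = (lam : ℤ)} =>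
        fun ζ : Metric.ball (0 : ℂ) 1 => scatteringPhi i.1.1 i.1.2 (ζ : ℂ)) := by
  classical
  rw [linearIndependent_iff']
  intro s g hsum i hi
  by_contra hgi
  have hb : ∀ j : {pq : ℤ × ℤ // 1 ≤ pq.1 ∧ 1 ≤ pq.2 ∧ pq.1 * pq.2 = (lam : ℤ)},
      1 ≤ j.1.1 ∧ 1 ≤ j.1.2 ∧ j.1.1 ≤ (lam : ℤ) ∧ j.1.2 ≤ (lam : ℤ) := by
    intro j
    obtain ⟨h1, h2, h3⟩ := j.2
    refine ⟨h1, h2, ?_, ?_⟩ <;> nlinarith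
  have hdlam : ∀ j : {pq : ℤ × ℤ // 1 ≤ pq.1 ∧ 1 ≤ pq.2 ∧ pq.1 * pq.2 = (lam : ℤ)},
      1 ≤ j.1.1 - j.1.2 + lam := by
    intro j; obtain ⟨a, b, c, d⟩ := hb j; omega
  set e : {pq : ℤ × ℤ // 1 ≤ pq.1 ∧ 1 ≤ pq.2 ∧ pq.1 * pq.2 = (lam : ℤ)} → ℕ :=
    fun j => (j.1.1 - j.1.2 + lam).toNat with he
  have hecast : ∀ j, (e j : ℤ) = j.1.1 - j.1.2 + lam := by
    intro j
    rw [he]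
    exact Int.toNat_of_nonneg (by linarith [hdlam j])
  have einj : ∀ j k, e j = e k → j = k := by
    intro j k hjk
    have hd : j.1.1 - j.1.2 = k.1.1 - k.1.2 := by
      have h1 := hecast j; have h2 := hecast k
      rw [hjk] at h1; omega
    obtain ⟨hj1, hj2, hj3⟩ := j.2
    obtain ⟨hk1, hk2, hk3⟩ := k.2
    obtain ⟨hpe, hqe⟩ := dinj hj1 hj2 hk1 hk2 hj3 hk3 hd
    exact Subtype.ext (Prod.ext hpe hqe)
  have key : ∀ t : ℝ, t ∈ Set.Ioo (0:ℝ) 1 →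
      g i * scatteringPhi i.1.1 i.1.2 (t : ℂ) = 0 := by
    intro t ht
    set Pz : Polynomial ℂ :=
      ∑ j ∈ s, Polynomial.C (g j * scatteringPhi j.1.1 j.1.2 (t : ℂ)) * Polynomial.X ^ (e j)
      with hPz
    have hroot : ∀ z : ℂ, ‖z‖ = 1 → Polynomial.IsRoot Pz z := by
      intro z hz
      have hz0 : z ≠ 0 := fun h => by rw [h] at hz; simp at hz
      have hmem : (z * (t:ℂ)) ∈ Metric.ball (0:ℂ) 1 := by
        rw [Metric.mem_ball, dist_zero_right, norm_mul,
          show ‖z‖ = 1 from hz, one_mul, Complex.norm_real,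
          Real.norm_of_nonneg (le_of_lt ht.1)]
        exact ht.2
      have hsum0 : ∑ j ∈ s, g j * scatteringPhi j.1.1 j.1.2 (z * (t:ℂ)) = 0 := by
        have h := congr_fun hsum ⟨z * (t:ℂ), hmem⟩
        simpa [Finset.sum_apply] using h
      have hsum1 : ∑ j ∈ s,
          (g j * scatteringPhi j.1.1 j.1.2 (t:ℂ)) * z ^ (j.1.1 - j.1.2) = 0 := by
        rw [← hsum0]
        apply Finset.sum_congr rfl
        intro j _
        rw [phi_rot (hb j).1 (hb j).2.1 hz]
        ring
      show Polynomial.eval z Pz = 0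
      rw [hPz, Polynomial.eval_finset_sum]
      have hterm : ∀ j ∈ s,
          Polynomial.eval z (Polynomial.C (g j * scatteringPhi j.1.1 j.1.2 (t:ℂ))
            * Polynomial.X ^ (e j))
          = ((g j * scatteringPhi j.1.1 j.1.2 (t:ℂ)) * z ^ (j.1.1 - j.1.2))
            * z ^ ((lam : ℤ)) := by
        intro j _
        rw [Polynomial.eval_mul, Polynomial.eval_C, Polynomial.eval_pow, Polynomial.eval_X]
        rw [← zpow_natCast z (e j), hecast j, zpow_add₀ hz0]
        ring
      rw [Finset.sum_congr rfl hterm, ← Finset.sum_mul, hsum1, zero_mul]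
    have hP0 : Pz = 0 :=
      Polynomial.eq_zero_of_infinite_isRoot _ (circle_infinite.mono fun z hz => hroot z hz)
    have hco := congrArg (fun Q : Polynomial ℂ => Polynomial.coeff Q (e i)) hP0
    simp only [Polynomial.coeff_zero] at hco
    rw [hPz, Polynomial.finset_sum_coeff,
      Finset.sum_eq_single_of_mem i hi (fun j hj hne => by
        rw [Polynomial.coeff_C_mul, Polynomial.coeff_X_pow,
          if_neg (fun h => hne (einj j i h.symm)), mul_zero]),
      Polynomial.coeff_C_mul, Polynomial.coeff_X_pow, if_pos rfl, mul_one] at hco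
    exact hco
  obtain ⟨hp1, hq1, hmul⟩ := i.2
  have hphi0 : ∀ t : ℝ, t ∈ Set.Ioo (0:ℝ) 1 →
      MvPolynomial.eval (fun _ : Fin 2 => (t:ℂ)) (scatteringD i.1.1.toNat i.1.2.toNat) = 0 := by
    intro t ht
    have h := key t ht
    rw [mul_eq_zero] at h
    rcases h with h | h
    · exact absurd h hgi
    rw [scatteringPhi, if_pos ⟨hp1, hq1⟩] at h
    have hc : ((-1:ℂ) ^ (i.1.1.toNat) /
        ((i.1.2 : ℂ) * (Nat.factorial (i.1.1.toNat + i.1.2.toNat - 1) : ℂ))) ≠ 0 := by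
      apply div_ne_zero
      · exact pow_ne_zero _ (by norm_num)
      · apply mul_ne_zero
        · exact_mod_cast Int.cast_ne_zero.mpr (show i.1.2 ≠ 0 by omega)
        · exact_mod_cast Nat.cast_ne_zero.mpr (Nat.factorial_ne_zero _)
    have hmid : (1 - (t:ℂ) * (starRingEnd ℂ) (t:ℂ)) ≠ 0 := by
      rw [Complex.conj_ofReal]
      intro hh
      have h2 : ((1 - t * t : ℝ) : ℂ) = 0 := by push_cast; linear_combination hh
      rw [Complex.ofReal_eq_zero] at h2
      nlinarith [ht.1, ht.2]
    have hfun : (fun i' : Fin 2 => if i' = 0 then (t:ℂ) else (starRingEnd ℂ) (t:ℂ))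
        = fun _ : Fin 2 => (t:ℂ) := by
      funext i'
      split <;> simp [Complex.conj_ofReal]
    rw [hfun] at h
    rcases mul_eq_zero.mp h with h' | h'
    · rcases mul_eq_zero.mp h' with h'' | h''
      · exact absurd h'' hc
      · exact absurd h'' hmid
    · exact h'
  exact diag_ne_zero (p := i.1.1.toNat) (q := i.1.2.toNat) (by omega) (by omega)
    (scatteringD_hom (by omega) (by omega))
    (scatteringD_coeff_ne (by omega) (by omega)) hphi0
end

section
/- Let m be a nonnegative integer, λ ∈ ℂ, and let (b_j)_{j≥0} be a sequence of complex numbers satisfying: b_j = 0 for all j < m; b_{m+1} = 0; and the recurrence ((j+2)² - m²)·b_{j+2} = (j² - m² - 4λ)·b_j for every j ≥ 0. Then the series Σ_{j=0}^∞ b_j converges absolutely, the infinite product ∏_{ν=1}^∞ (1 - λ/(ν(m+ν))) converges, and Σ_{j=0}^∞ b_j = b_m · ∏_{ν=1}^∞ (1 - λ/(ν(m+ν))). Moreover, the infinite product ∏_{ν=1}^∞ (1 - λ/(ν(m+ν))) equals 0 if and only if λ = ν(m+ν) for some integer ν ≥ 1. -/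
open Finset Filter

private lemma s10_sum_inv_sq (k : ℕ) :
    ∑ ν ∈ Finset.range k, (1:ℝ)/((ν:ℝ)+1)^2 ≤ 2 - 2/((k:ℝ)+1) := by
  induction k with
  | zero => norm_num
  | succ k ih =>
    rw [Finset.sum_range_succ]
    have hk : (0:ℝ) < (k:ℝ)+1 := by positivity
    have hk2 : (0:ℝ) < (k:ℝ)+2 := by positivity
    have key : (1:ℝ)/((k:ℝ)+1)^2 ≤ 2/((k:ℝ)+1) - 2/((k:ℝ)+2) := by
      rw [div_sub_div _ _ (ne_of_gt hk) (ne_of_gt hk2),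
        div_le_div_iff₀ (by positivity) (by positivity)]
      nlinarith [sq_nonneg ((k:ℝ)+1)]
    push_cast
    have h2 : ((k:ℝ)+1+1) = (k:ℝ)+2 := by ring
    rw [h2]
    linarith

private lemma s10_even_bound (m k : ℕ) (b : ℕ → ℂ) (B DD : ℝ) (hB0 : 0 ≤ B)
    (hDDdef : DD = ‖b m‖*((m:ℝ)+1)^2 + B*((m:ℝ)+3)^2)
    (hBle : (((k+1)*(m+k+1) : ℕ):ℝ) * ‖b (m+2*k+2)‖ ≤ B) :
    ‖b (m+2*k+2)‖ ≤ DD / (((m+2*k+2 : ℕ):ℝ)+1)^2 := by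
  have hDnpos : (0:ℝ) < (((k+1)*(m+k+1) : ℕ):ℝ) := by
    have : 0 < (k+1)*(m+k+1) := Nat.mul_pos (Nat.succ_pos k) (by omega)
    exact_mod_cast this
  have hbk : ‖b (m+2*k+2)‖ ≤ B / (((k+1)*(m+k+1) : ℕ):ℝ) := by
    rw [le_div_iff₀ hDnpos]
    nlinarith [hBle]
  refine hbk.trans ?_
  rw [div_le_div_iff₀ hDnpos (by positivity)]
  push_cast
  have hmn : (0:ℝ) ≤ (m:ℝ) := Nat.cast_nonneg m
  have hkn : (0:ℝ) ≤ (k:ℝ) := Nat.cast_nonneg k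
  have key1 : ((m:ℝ)+2*(k:ℝ)+2+1) ≤ ((m:ℝ)+3)*((k:ℝ)+1) := by nlinarith
  have key2 : ((m:ℝ)+2*(k:ℝ)+2+1)^2 ≤ (((m:ℝ)+3)*((k:ℝ)+1))^2 :=
    pow_le_pow_left₀ (by linarith) key1 2
  have key3 : B*((m:ℝ)+2*(k:ℝ)+2+1)^2 ≤ B*(((m:ℝ)+3)*((k:ℝ)+1))^2 :=
    mul_le_mul_of_nonneg_left key2 hB0
  have key4 : B*(((m:ℝ)+3)*((k:ℝ)+1))^2 ≤ B*(((m:ℝ)+3)^2*(((k:ℝ)+1)*((m:ℝ)+(k:ℝ)+1))) := by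
    nlinarith [mul_nonneg (mul_nonneg (mul_nonneg hB0 (sq_nonneg ((m:ℝ)+3))) hmn)
      (by linarith : (0:ℝ) ≤ (k:ℝ)+1)]
  have h5 : (0:ℝ) ≤ ‖b m‖*((m:ℝ)+1)^2 * (((k:ℝ)+1)*((m:ℝ)+(k:ℝ)+1)) :=
    mul_nonneg (mul_nonneg (norm_nonneg (b m)) (sq_nonneg ((m:ℝ)+1)))
      (mul_nonneg (by linarith) (by linarith))
  rw [hDDdef]
  nlinarith [key3, key4, h5]

/-- let `m ≥ 0`, `λ ∈ ℂ` and let `(b_j)` satisfy `b_j = 0` for `j < m`,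
`b_{m+1} = 0`, and `((j+2)² - m²)b_{j+2} = (j² - m² - 4λ)b_j` for all `j ≥ 0`.  Then
`Σ_j b_j` converges absolutely, the infinite product `∏_{ν=1}^∞ (1 - λ/(ν(m+ν)))`
converges (to some `L`, the limit of its partial products), `Σ_j b_j = b_m·L`, and
`L = 0` if and only if `λ = ν(m+ν)` for some integer `ν ≥ 1`. -/
theorem statement10 (m : ℕ) (lam : ℂ) (b : ℕ → ℂ)
    (h0 : ∀ j, j < m → b j = 0) (h1 : b (m + 1) = 0)
    (hrec : ∀ j : ℕ, (((j : ℂ) + 2) ^ 2 - (m : ℂ) ^ 2) * b (j + 2) =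
      ((j : ℂ) ^ 2 - (m : ℂ) ^ 2 - 4 * lam) * b j) :
    Summable (fun j : ℕ => ‖b j‖) ∧
    ∃ L : ℂ,
      Filter.Tendsto
        (fun J : ℕ => ∏ ν ∈ Finset.Icc 1 J, (1 - lam / ((ν : ℂ) * ((m : ℂ) + (ν : ℂ)))))
        Filter.atTop (nhds L) ∧
      (∑' j : ℕ, b j) = b m * L ∧
      (L = 0 ↔ ∃ ν : ℕ, 1 ≤ ν ∧ lam = (ν : ℂ) * ((m : ℂ) + (ν : ℂ))) := by
  have hC : ∀ n : ℕ, 0 < n → ((n:ℂ)) ≠ 0 := fun n hn => Nat.cast_ne_zero.2 hn.ne'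
  set P : ℕ → ℂ :=
    fun J => ∏ ν ∈ Finset.Icc 1 J, (1 - lam / ((ν : ℂ) * ((m : ℂ) + (ν : ℂ)))) with hPdef
  have hPsucc : ∀ K : ℕ, P (K+1) = P K * (1 - lam / (((K:ℂ)+1) * ((m:ℂ) + (K:ℂ) + 1))) := by
    intro K
    show (∏ ν ∈ Finset.Icc 1 (K+1), (1 - lam / ((ν : ℂ) * ((m : ℂ) + (ν : ℂ))))) = _
    rw [Finset.prod_Icc_succ_top (Nat.le_add_left 1 K)]
    push_cast
    congr 1
    ring
  have hD : ∀ K : ℕ, ((K:ℂ)+1) * ((m:ℂ)+(K:ℂ)+1) ≠ 0 := by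
    intro K
    have h1' : ((K:ℂ)+1) ≠ 0 := by
      have := hC (K+1) (by omega); push_cast at this; exact this
    have h2' : ((m:ℂ)+(K:ℂ)+1) ≠ 0 := by
      have := hC (m+K+1) (by omega); push_cast at this; exact this
    exact mul_ne_zero h1' h2'
  have hstep : ∀ k : ℕ, (((k:ℂ)+1) * ((m:ℂ)+(k:ℂ)+1)) * b (m+2*k+2) =
      ((k:ℂ)*((m:ℂ)+(k:ℂ)) - lam) * b (m+2*k) := by
    intro k
    have h := hrec (m+2*k)
    push_cast at h
    linear_combination h/4
  have hodd : ∀ k : ℕ, b (m + 2*k + 1) = 0 := by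
    intro k
    induction k with
    | zero => simpa using h1
    | succ k ih =>
      have h := hrec (m+2*k+1)
      rw [ih, mul_zero] at h
      have hne : (((m+2*k+1 : ℕ):ℂ) + 2)^2 - (m:ℂ)^2 ≠ 0 := by
        push_cast
        have e1 : ((m:ℂ)+(2*(k:ℂ)+1)+2)^2 - (m:ℂ)^2
            = (2*(k:ℂ)+3) * (2*(m:ℂ)+2*(k:ℂ)+3) := by ring
        have c1 : (2*(k:ℂ)+3) ≠ 0 := by
          have := hC (2*k+3) (by omega); push_cast at this; exact this
        have c2 : (2*(m:ℂ)+2*(k:ℂ)+3) ≠ 0 := by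
          have := hC (2*m+2*k+3) (by omega); push_cast at this; exact this
        rw [show (↑m + 2 * ↑k + 1 + 2 : ℂ) = ((m:ℂ)+(2*(k:ℂ)+1)+2) from by ring, e1]
        exact mul_ne_zero c1 c2
      have hz := (mul_eq_zero.mp h).resolve_left hne
      rw [show m+2*(k+1)+1 = m+2*k+1+2 from by ring]
      exact hz
  have hU : ∀ K : ℕ, ((K:ℂ)*((m:ℂ)+(K:ℂ)) - lam) * b (m+2*K) = (-lam) * b m * P K := by
    intro K
    induction K with
    | zero =>
      simp only [Nat.cast_zero, mul_zero, Nat.mul_zero, Nat.add_zero]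
      have : P 0 = 1 := by simp [hPdef]
      rw [this]
      ring
    | succ K ih =>
      have h2 := hstep K
      rw [ih] at h2
      have hD' := hD K
      have hK1 := left_ne_zero_of_mul hD'
      have hK2 := right_ne_zero_of_mul hD'
      rw [hPsucc K, show m+2*(K+1) = m+2*K+2 from by ring]
      push_cast
      field_simp
      linear_combination (((K:ℂ)+1)*((m:ℂ)+(K:ℂ)+1) - lam) * h2
  have hSsum : ∀ K : ℕ, ∑ j ∈ Finset.range (m+2*K+1), b j = b m * P K := by
    intro K
    induction K with
    | zero =>
      have hz : ∀ j ∈ Finset.range m, b j = 0 := fun j hj => h0 j (Finset.mem_range.mp hj)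
      rw [show m+2*0+1 = m+1 from by ring, Finset.sum_range_succ, Finset.sum_eq_zero hz]
      have : P 0 = 1 := by simp [hPdef]
      rw [this]; ring
    | succ K ih =>
      rw [show m+2*(K+1)+1 = (m+2*K+1)+1+1 from by ring, Finset.sum_range_succ,
        Finset.sum_range_succ, ih, show m+2*K+1+1 = m+2*K+2 from by ring, hodd K, hPsucc K]
      have h2 := hstep K
      rw [hU K] at h2
      have hD' := hD K
      have hK1 := left_ne_zero_of_mul hD'
      have hK2 := right_ne_zero_of_mul hD'
      field_simp
      linear_combination h2
  -- norm bounds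
  set A := (‖lam‖) * (‖b m‖) with hA
  have hA0 : (0:ℝ) ≤ A := by rw [hA]; positivity
  set s : ℕ → ℝ := fun k => ∑ ν ∈ Finset.range k, ‖lam‖/((ν:ℝ)+1)^2 with hs
  have hkey : ∀ k : ℕ, (((k+1)*(m+k+1) : ℕ):ℝ) * ‖b (m+2*k+2)‖ ≤
      (((k*(m+k) : ℕ):ℝ) + ‖lam‖) * ‖b (m+2*k)‖ := by
    intro k
    have h := hstep k
    rw [show ((k:ℂ)+1)*((m:ℂ)+(k:ℂ)+1) = (((k+1)*(m+k+1) : ℕ):ℂ) from by push_cast; ring] at h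
    have h2 := congrArg norm h
    rw [norm_mul, norm_mul, Complex.norm_natCast] at h2
    have e2 : ‖(k:ℂ)*((m:ℂ)+(k:ℂ)) - lam‖ ≤ ((k*(m+k) : ℕ):ℝ) + ‖lam‖ := by
      refine (norm_sub_le _ _).trans ?_
      rw [show (k:ℂ)*((m:ℂ)+(k:ℂ)) = ((k*(m+k) : ℕ):ℂ) from by push_cast; ring,
        Complex.norm_natCast]
    rw [h2]
    exact mul_le_mul_of_nonneg_right e2 (norm_nonneg _)
  have hebound : ∀ k : ℕ, (((k+1)*(m+k+1) : ℕ):ℝ) * ‖b (m+2*k+2)‖ ≤ A * Real.exp (s k) := by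
    intro k
    induction k with
    | zero =>
      have h := hkey 0
      norm_num at h ⊢
      simpa [hA, hs] using h
    | succ k ih =>
      have h := hkey (k+1)
      rw [show m+2*(k+1) = m+2*k+2 from by ring,
        show (k+1)*(m+(k+1)) = (k+1)*(m+k+1) from by ring] at h
      set E := ‖b (m+2*k+2)‖ with hE'
      set R := A * Real.exp (s k) with hR'
      have hE : (0:ℝ) ≤ E := norm_nonneg _
      have hR : (0:ℝ) ≤ R := mul_nonneg hA0 (Real.exp_nonneg _)
      set t := ‖lam‖/((k:ℝ)+1)^2 with ht'
      have ht : (0:ℝ) ≤ t := by rw [ht']; positivity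
      have hksq : ((k:ℝ)+1)^2 ≤ (((k+1)*(m+k+1) : ℕ):ℝ) := by
        push_cast
        nlinarith [Nat.cast_nonneg (α := ℝ) m, Nat.cast_nonneg (α := ℝ) k]
      have e3 : ((k:ℝ)+1)^2 * E ≤ R := le_trans (mul_le_mul_of_nonneg_right hksq hE) ih
      have e4 : ‖lam‖ * (((k:ℝ)+1)^2 * E) ≤ ‖lam‖ * R :=
        mul_le_mul_of_nonneg_left e3 (norm_nonneg lam)
      have hlamE : ‖lam‖ * E ≤ t * R := by
        rw [ht', div_mul_eq_mul_div, le_div_iff₀ (by positivity)]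
        nlinarith [e4]
      have h6 : 1 + t ≤ Real.exp t := by linarith [Real.add_one_le_exp t]
      have hsk1 : s (k+1) = s k + t := Finset.sum_range_succ _ _
      have h8 : A * Real.exp (s (k+1)) = R * Real.exp t := by
        rw [hsk1, Real.exp_add, hR']; ring
      calc (((k+1+1)*(m+(k+1)+1) : ℕ):ℝ) * ‖b (m+2*(k+1)+2)‖
          ≤ ((((k+1)*(m+k+1) : ℕ):ℝ) + ‖lam‖) * E := h
        _ ≤ R + t * R := by nlinarith [ih, hlamE]
        _ = R * (1+t) := by ring
        _ ≤ R * Real.exp t := mul_le_mul_of_nonneg_left h6 hR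
        _ = A * Real.exp (s (k+1)) := h8.symm
  -- uniform bound B
  set B := A * Real.exp (2*‖lam‖) with hB
  have hB0 : (0:ℝ) ≤ B := mul_nonneg hA0 (Real.exp_nonneg _)
  have hs2 : ∀ k : ℕ, s k ≤ 2*‖lam‖ := by
    intro k
    have h1' : s k = ‖lam‖ * ∑ ν ∈ Finset.range k, (1:ℝ)/((ν:ℝ)+1)^2 := by
      rw [hs, Finset.mul_sum]
      simp_rw [mul_one_div]
    have h2' : ∑ ν ∈ Finset.range k, (1:ℝ)/((ν:ℝ)+1)^2 ≤ 2 := by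
      refine (s10_sum_inv_sq k).trans ?_
      have : (0:ℝ) ≤ 2/((k:ℝ)+1) := by positivity
      linarith
    rw [h1']
    calc ‖lam‖ * ∑ ν ∈ Finset.range k, (1:ℝ)/((ν:ℝ)+1)^2 ≤ ‖lam‖ * 2 :=
          mul_le_mul_of_nonneg_left h2' (norm_nonneg lam)
      _ = 2*‖lam‖ := by ring
  have hBle : ∀ k : ℕ, (((k+1)*(m+k+1) : ℕ):ℝ) * ‖b (m+2*k+2)‖ ≤ B := by
    intro k
    refine (hebound k).trans ?_
    rw [hB]
    exact mul_le_mul_of_nonneg_left (Real.exp_le_exp.2 (hs2 k)) hA0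
  -- pointwise bound by DD/(j+1)^2
  have hDD0 : (0:ℝ) ≤ ‖b m‖*((m:ℝ)+1)^2 + B*((m:ℝ)+3)^2 := by positivity
  set DD := ‖b m‖*((m:ℝ)+1)^2 + B*((m:ℝ)+3)^2 with hDDdef
  have hnormle : ∀ j : ℕ, ‖b j‖ ≤ DD / ((j:ℝ)+1)^2 := by
    intro j
    rcases lt_or_ge j m with hj | hj
    · rw [h0 j hj]
      have : (0:ℝ) ≤ DD / ((j:ℝ)+1)^2 := by positivity
      simpa using this
    · obtain ⟨i, rfl⟩ := Nat.exists_eq_add_of_le hj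
      rcases Nat.even_or_odd i with ⟨k, hk⟩ | ⟨k, hk⟩
      · subst hk
        rcases k with _ | k
        · -- j = m
          rw [show m + (0+0) = m from rfl]
          rw [le_div_iff₀ (by positivity), hDDdef]
          nlinarith [mul_nonneg hB0 (sq_nonneg ((m:ℝ)+3))]
        · -- j = m + 2k + 2
          rw [show m + ((k+1)+(k+1)) = m+2*k+2 from by ring]
          exact s10_even_bound m k b B DD hB0 hDDdef (hBle k)
      · -- odd
        subst hk
        rw [show m + (2*k+1) = m+2*k+1 from by ring, hodd k]
        have : (0:ℝ) ≤ DD / ((↑(m+2*k+1):ℝ)+1)^2 := by positivity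
        simpa using this
  have hsumg : Summable (fun j : ℕ => DD / ((j:ℝ)+1)^2) := by
    have base : Summable (fun n : ℕ => 1/((n:ℝ))^2) := Real.summable_one_div_nat_pow.2 one_lt_two
    have shift : Summable (fun n : ℕ => 1/((((n+1:ℕ)):ℝ))^2) :=
      (summable_nat_add_iff (f := fun n : ℕ => 1/((n:ℝ))^2) 1).2 base
    exact (shift.mul_left DD).congr (fun j => by push_cast; ring)
  have goal1 : Summable (fun j : ℕ => ‖b j‖) :=
    Summable.of_nonneg_of_le (fun j => norm_nonneg _) hnormle hsumg
  -- tsum from a tendsto of partial products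
  have htsum : ∀ L : ℂ, Tendsto P atTop (nhds L) → (∑' j : ℕ, b j) = b m * L := by
    intro L hL
    have hsb : Summable b := Summable.of_norm goal1
    have h1' := hsb.hasSum.tendsto_sum_nat
    have hmono : Tendsto (fun K : ℕ => m+2*K+1) atTop atTop :=
      tendsto_atTop_mono (fun K => by show K ≤ m+2*K+1; omega) tendsto_id
    have h2' := h1'.comp hmono
    have h2'' : Tendsto (fun K : ℕ => b m * P K) atTop (nhds (∑' j : ℕ, b j)) := by
      refine h2'.congr (fun K => ?_)
      simp only [Function.comp]
      exact hSsum K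
    have h3' : Tendsto (fun K : ℕ => b m * P K) atTop (nhds (b m * L)) := hL.const_mul (b m)
    exact tendsto_nhds_unique h2'' h3'
  refine ⟨goal1, ?_⟩
  by_cases hex : ∃ ν : ℕ, 1 ≤ ν ∧ lam = (ν:ℂ)*((m:ℂ)+(ν:ℂ))
  · obtain ⟨ν₀, hν₁, hν₂⟩ := hex
    have hev : ∀ J, ν₀ ≤ J → P J = 0 := by
      intro J hJ
      refine Finset.prod_eq_zero (Finset.mem_Icc.2 ⟨hν₁, hJ⟩) ?_
      have hne : (ν₀:ℂ)*((m:ℂ)+(ν₀:ℂ)) ≠ 0 := by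
        refine mul_ne_zero (hC ν₀ hν₁) ?_
        have := hC (m+ν₀) (by omega); push_cast at this; exact this
      rw [← hν₂, div_self ?_, sub_self]
      rw [hν₂]; exact hne
    have hgoes : Tendsto P atTop (nhds (0:ℂ)) := by
      exact Tendsto.congr' (eventually_atTop.2 ⟨ν₀, fun J hJ => (hev J hJ).symm⟩)
        tendsto_const_nhds
    exact ⟨0, hgoes, htsum 0 hgoes, ⟨fun _ => ⟨ν₀, hν₁, hν₂⟩, fun _ => rfl⟩⟩
  · set f : ℕ → ℂ := fun ν => 1 - lam / (((ν:ℂ)+1)*((m:ℂ)+(ν:ℂ)+1)) with hfdef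
    have hfne : ∀ ν : ℕ, f ν ≠ 0 := by
      intro ν hzero
      apply hex
      refine ⟨ν+1, le_add_self, ?_⟩
      have hlam : lam = ((ν:ℂ)+1)*((m:ℂ)+(ν:ℂ)+1) := by
        have h' : lam / (((ν:ℂ)+1)*((m:ℂ)+(ν:ℂ)+1)) = 1 := by
          have := sub_eq_zero.mp hzero
          exact this.symm
        exact (div_eq_one_iff_eq (hD ν)).mp h'
      push_cast
      rw [hlam]; ring
    have hxnorm : ∀ ν : ℕ, ‖lam / (((ν:ℂ)+1)*((m:ℂ)+(ν:ℂ)+1))‖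
        = ‖lam‖ / (((ν+1)*(m+ν+1) : ℕ):ℝ) := by
      intro ν
      rw [norm_div, show ((ν:ℂ)+1)*((m:ℂ)+(ν:ℂ)+1) = (((ν+1)*(m+ν+1) : ℕ):ℂ) from by
        push_cast; ring, Complex.norm_natCast]
    have hlog : Summable (fun ν : ℕ => Complex.log (f ν)) := by
      refine Summable.of_norm_bounded_eventually
        (g := fun ν : ℕ => (3/2) * (‖lam‖/((ν:ℝ)+1)^2)) ?_ ?_
      · have base : Summable (fun n : ℕ => 1/((n:ℝ))^2) := Real.summable_one_div_nat_pow.2 one_lt_two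
        have shift : Summable (fun n : ℕ => 1/((((n+1:ℕ)):ℝ))^2) :=
          (summable_nat_add_iff (f := fun n : ℕ => 1/((n:ℝ))^2) 1).2 base
        exact ((shift.mul_left ‖lam‖).mul_left (3/2)).congr (fun j => by push_cast; ring)
      · rw [Nat.cofinite_eq_atTop]
        rw [eventually_atTop]
        refine ⟨⌈2*‖lam‖⌉₊, fun ν hν => ?_⟩
        have hν' : 2*‖lam‖ ≤ (ν:ℝ) := le_trans (Nat.le_ceil _) (by exact_mod_cast hν)
        have hdge : (((ν+1)*(m+ν+1) : ℕ):ℝ) ≥ ((ν:ℝ)+1)^2 := by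
          push_cast
          nlinarith [Nat.cast_nonneg (α := ℝ) m, Nat.cast_nonneg (α := ℝ) ν]
        have hdpos : (0:ℝ) < (((ν+1)*(m+ν+1) : ℕ):ℝ) := by
          have : 0 < (ν+1)*(m+ν+1) := Nat.mul_pos (Nat.succ_pos ν) (by omega)
          exact_mod_cast this
        have hxle : ‖lam / (((ν:ℂ)+1)*((m:ℂ)+(ν:ℂ)+1))‖ ≤ ‖lam‖/((ν:ℝ)+1)^2 := by
          rw [hxnorm ν]
          exact div_le_div_of_nonneg_left (norm_nonneg lam) (by positivity) hdge
        have hxhalf : ‖-(lam / (((ν:ℂ)+1)*((m:ℂ)+(ν:ℂ)+1)))‖ ≤ 1/2 := by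
          rw [norm_neg]
          refine hxle.trans ?_
          rw [div_le_div_iff₀ (by positivity) (by norm_num)]
          nlinarith [Nat.cast_nonneg (α := ℝ) ν, norm_nonneg lam]
        have hfν : f ν = 1 + -(lam / (((ν:ℂ)+1)*((m:ℂ)+(ν:ℂ)+1))) := by
          rw [hfdef]; ring
        rw [hfν]
        refine (Complex.norm_log_one_add_half_le_self hxhalf).trans ?_
        rw [norm_neg]
        exact mul_le_mul_of_nonneg_left hxle (by norm_num)
    have hIccR : ∀ J : ℕ, P J = ∏ ν ∈ Finset.range J, f ν := by
      intro J
      induction J with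
      | zero => simp [hPdef]
      | succ J ih => rw [hPsucc J, Finset.prod_range_succ, ih]
    have hhp : HasProd f (∏' ν : ℕ, f ν) := by
      have := (Complex.hasProd_of_hasSum_log hfne hlog.hasSum).multipliable.hasProd
      simpa using this
    have hL0 : (∏' ν : ℕ, f ν) ≠ 0 := by
      have heq := Complex.cexp_tsum_eq_tprod hfne hlog
      rw [← heq]
      exact Complex.exp_ne_zero _
    have htendsto : Tendsto P atTop (nhds (∏' ν : ℕ, f ν)) := by
      have := hhp.tendsto_prod_nat
      refine this.congr (fun J => (hIccR J).symm)
    exact ⟨∏' ν : ℕ, f ν, htendsto, htsum _ htendsto,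
      ⟨fun h => absurd h hL0, fun h => absurd h hex⟩⟩
end

section
/- Let n ≥ 1 and define U: D^n × ℝ^n → ℂ (where D ⊂ ℝ² is the open unit disk) by U(x_1,y_1,…,x_n,y_n,ξ_1,…,ξ_n) = Ψ((x_1+iy_1,…,x_n+iy_n),(e^{iξ_1},…,e^{iξ_n})). Then for every index 1 ≤ j ≤ n and every point of the domain, -((1-x_j²-y_j²)/4)·((∂U/∂x_j)² + (∂U/∂y_j)²) + (∂U/∂ξ_{j+1})·(∂U/∂ξ_j) = 0, where ∂U/∂ξ_{n+1} is interpreted as 0 (so for j = n the second term is absent). -/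
/-- `Ψ` composed over a list of `(w,z)` pairs, applied to `0`:
`PsiList [(w₁,z₁),…,(wₙ,zₙ)] = Ψ^{w₁}_{z₁} ∘ ⋯ ∘ Ψ^{wₙ}_{zₙ}(0)`, where
`Ψ^{w}_{z}(v) = z(v+w)/(1+conj(w)·v)`. -/
noncomputable def PsiList : List (ℂ × ℂ) → ℂ
  | [] => 0
  | wz :: rest => wz.2 * (PsiList rest + wz.1) / (1 + (starRingEnd ℂ) wz.1 * PsiList rest)

/-- `U(x₁,y₁,…,xₙ,yₙ,ξ₁,…,ξₙ) = Ψ((x₁+iy₁,…,xₙ+iyₙ),(e^{iξ₁},…,e^{iξₙ}))`. -/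
noncomputable def Ufun (n : ℕ) (x y ξ : Fin n → ℝ) : ℂ :=
  PsiList (List.ofFn fun j : Fin n =>
    ((x j : ℂ) + (y j : ℂ) * Complex.I, Complex.exp (Complex.I * (ξ j : ℂ))))

section Statement12Helpers
open Complex

/- ## helper lemmas -/

lemma denom_ne (w v : ℂ) (hw : ‖w‖ < 1) (hv : ‖v‖ ≤ 1) :
    1 + (starRingEnd ℂ) w * v ≠ 0 := by
  intro he
  have h1 : ‖(starRingEnd ℂ) w * v‖ < 1 := by
    rw [norm_mul, RCLike.norm_conj]
    calc ‖w‖ * ‖v‖ ≤ ‖w‖ * 1 := mul_le_mul_of_nonneg_left hv (norm_nonneg _)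
      _ < 1 := by simpa using hw
  have : (starRingEnd ℂ) w * v = -1 := by linear_combination he
  rw [this] at h1; simp at h1

lemma psi_norm_le (w z v : ℂ) (hw : ‖w‖ < 1) (hz : ‖z‖ = 1) (hv : ‖v‖ ≤ 1) :
    ‖z * (v + w) / (1 + (starRingEnd ℂ) w * v)‖ ≤ 1 := by
  have hD := denom_ne w v hw hv
  rw [norm_div, norm_mul, hz, one_mul, div_le_one (norm_pos_iff.mpr hD)]
  have key : Complex.normSq (1 + (starRingEnd ℂ) w * v) - Complex.normSq (v + w)
      = (1 - Complex.normSq w) * (1 - Complex.normSq v) := by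
    simp only [Complex.normSq_apply, Complex.add_re, Complex.add_im, Complex.mul_re,
      Complex.mul_im, Complex.conj_re, Complex.conj_im, Complex.one_re, Complex.one_im]
    ring
  have hw2 : Complex.normSq w < 1 := by
    have h := Complex.sq_norm w
    nlinarith [norm_nonneg w]
  have hv2 : Complex.normSq v ≤ 1 := by
    have h := Complex.sq_norm v
    nlinarith [norm_nonneg v]
  have h2 : Complex.normSq (v + w) ≤ Complex.normSq (1 + (starRingEnd ℂ) w * v) := by
    nlinarith [key]
  have h3 := Real.sqrt_le_sqrt h2
  rw [← Complex.norm_def, ← Complex.norm_def] at h3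
  simpa using h3

lemma PsiList_norm_le (l : List (ℂ × ℂ)) (h : ∀ p ∈ l, ‖p.1‖ < 1 ∧ ‖p.2‖ = 1) :
    ‖PsiList l‖ ≤ 1 := by
  induction l with
  | nil => simp [PsiList]
  | cons p rest ih =>
    have hp := h p List.mem_cons_self
    exact psi_norm_le p.1 p.2 (PsiList rest) hp.1 hp.2
      (ih fun q hq => h q (List.mem_cons_of_mem p hq))

lemma norm_w_lt (a b : ℝ) (h : a ^ 2 + b ^ 2 < 1) : ‖(a:ℂ) + (b:ℂ) * I‖ < 1 := by
  have h2 : ‖(a:ℂ) + (b:ℂ) * I‖ ^ 2 = a ^ 2 + b ^ 2 := by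
    rw [← Complex.normSq_eq_norm_sq]
    simp [Complex.normSq_apply]
    ring
  nlinarith [norm_nonneg ((a:ℂ) + (b:ℂ) * I)]

lemma Ufun_norm_le (n : ℕ) (x y ξ : Fin n → ℝ) (hxy : ∀ j, (x j) ^ 2 + (y j) ^ 2 < 1) :
    ‖Ufun n x y ξ‖ ≤ 1 := by
  apply PsiList_norm_le
  intro p hp
  rw [List.mem_ofFn] at hp
  obtain ⟨j, rfl⟩ := hp
  exact ⟨norm_w_lt _ _ (hxy j), by simp [Complex.norm_exp]⟩

lemma conj_xI (a b : ℝ) : (starRingEnd ℂ) ((a:ℂ) + (b:ℂ) * I) = (a:ℂ) - (b:ℂ) * I := by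
  rw [map_add, map_mul, Complex.conj_ofReal, Complex.conj_ofReal, Complex.conj_I]
  ring

lemma Ufun_zero (x y ξ : Fin 0 → ℝ) : Ufun 0 x y ξ = 0 := by
  simp [Ufun, PsiList]

lemma Ufun_succ (n : ℕ) (x y ξ : Fin (n+1) → ℝ) :
    Ufun (n+1) x y ξ =
      Complex.exp (Complex.I * (ξ 0 : ℂ)) *
        (Ufun n (x ∘ Fin.succ) (y ∘ Fin.succ) (ξ ∘ Fin.succ) + ((x 0 : ℂ) + (y 0 : ℂ) * Complex.I)) /
      (1 + (starRingEnd ℂ) ((x 0 : ℂ) + (y 0 : ℂ) * Complex.I) *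
        Ufun n (x ∘ Fin.succ) (y ∘ Fin.succ) (ξ ∘ Fin.succ)) := by
  simp [Ufun, List.ofFn_succ, PsiList, Function.comp]

lemma update_zero_comp {n : ℕ} (x : Fin (n+1) → ℝ) (t : ℝ) :
    (Function.update x 0 t) ∘ Fin.succ = x ∘ Fin.succ := by
  funext i
  exact Function.update_of_ne (Fin.succ_ne_zero i) t x

lemma update_mk_succ_comp {n : ℕ} (x : Fin (n+1) → ℝ) (k : ℕ) (h : k + 1 < n + 1) (t : ℝ) :
    (Function.update x ⟨k+1, h⟩ t) ∘ Fin.succ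
      = Function.update (x ∘ Fin.succ) ⟨k, by omega⟩ t := by
  funext i
  simp [Function.comp, Function.update_apply, Fin.ext_iff, Fin.val_succ]

lemma update_mk_succ_zero {n : ℕ} (x : Fin (n+1) → ℝ) (k : ℕ) (h : k + 1 < n + 1) (t : ℝ) :
    (Function.update x ⟨k+1, h⟩ t) 0 = x 0 :=
  Function.update_of_ne (by simp [Fin.ext_iff]) t x

/- ## derivative building blocks -/

lemma hasDerivAt_psiV (w z v : ℂ) (hD : 1 + (starRingEnd ℂ) w * v ≠ 0) :
    HasDerivAt (fun s : ℂ => z * (s + w) / (1 + (starRingEnd ℂ) w * s))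
      (z * (1 - w * (starRingEnd ℂ) w) / (1 + (starRingEnd ℂ) w * v) ^ 2) v := by
  set cw := (starRingEnd ℂ) w
  have h1 : HasDerivAt (fun s : ℂ => z * (s + w)) (z * 1) v :=
    ((hasDerivAt_id v).add_const w).const_mul z
  have h2 : HasDerivAt (fun s : ℂ => 1 + cw * s) (cw * 1) v :=
    ((hasDerivAt_id v).const_mul cw).const_add 1
  have h3 := h1.div h2 hD
  refine h3.congr_deriv ?_
  ring

lemma hasDerivAt_psiX (z v : ℂ) (a b : ℝ)
    (hD : 1 + ((a:ℂ) - (b:ℂ)*I) * v ≠ 0) :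
    HasDerivAt (fun t : ℝ => z * (v + ((t:ℂ) + (b:ℂ)*I)) / (1 + ((t:ℂ) - (b:ℂ)*I) * v))
      ((z * (1 + ((a:ℂ) - (b:ℂ)*I)*v) - z * (v + ((a:ℂ) + (b:ℂ)*I)) * v) /
        (1 + ((a:ℂ) - (b:ℂ)*I)*v) ^ 2) a := by
  have h1 : HasDerivAt (fun s : ℂ => z * (v + (s + (b:ℂ)*I))) (z * 1) (a:ℂ) :=
    (((hasDerivAt_id _).add_const _).const_add v).const_mul z
  have h2 : HasDerivAt (fun s : ℂ => 1 + (s - (b:ℂ)*I) * v) (1 * v) (a:ℂ) :=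
    (((hasDerivAt_id _).sub_const _).mul_const v).const_add 1
  have h3 := (h1.div h2 hD).comp_ofReal
  refine h3.congr_deriv ?_
  ring

lemma hasDerivAt_psiY (z v : ℂ) (a b : ℝ)
    (hD : 1 + ((a:ℂ) - (b:ℂ)*I) * v ≠ 0) :
    HasDerivAt (fun t : ℝ => z * (v + ((a:ℂ) + (t:ℂ)*I)) / (1 + ((a:ℂ) - (t:ℂ)*I) * v))
      (I * ((z * (1 + ((a:ℂ) - (b:ℂ)*I)*v) + z * (v + ((a:ℂ) + (b:ℂ)*I)) * v) /
        (1 + ((a:ℂ) - (b:ℂ)*I)*v) ^ 2)) b := by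
  have h1 : HasDerivAt (fun s : ℂ => z * (v + ((a:ℂ) + s*I))) (z * I) (b:ℂ) := by
    simpa using ((((hasDerivAt_id (b:ℂ)).mul_const I).const_add (a:ℂ)).const_add v).const_mul z
  have h2 : HasDerivAt (fun s : ℂ => 1 + ((a:ℂ) - s*I) * v) (-I * v) (b:ℂ) := by
    have : HasDerivAt (fun s : ℂ => (a:ℂ) - s*I) (-I) (b:ℂ) := by
      simpa using ((hasDerivAt_id (b:ℂ)).mul_const I).const_sub (a:ℂ)
    exact (this.mul_const v).const_add 1
  have h3 := (h1.div h2 hD).comp_ofReal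
  refine h3.congr_deriv ?_
  field_simp
  ring

lemma hasDerivAt_expI (c : ℂ) (t : ℝ) :
    HasDerivAt (fun s : ℝ => Complex.exp (I * (s:ℂ)) * c)
      (I * Complex.exp (I * (t:ℂ)) * c) t := by
  have h1 : HasDerivAt (fun s : ℂ => Complex.exp (I * s)) (Complex.exp (I * (t:ℂ)) * I) (t:ℂ) := by
    have h0 := (Complex.hasDerivAt_exp (I * (t:ℂ))).comp (t:ℂ)
      ((hasDerivAt_id (t:ℂ)).const_mul I)
    have : (Complex.exp ∘ fun s : ℂ => I * s) = fun s : ℂ => Complex.exp (I * s) := rfl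
    rw [this] at h0
    simpa [mul_comm] using h0
  have h2 := (h1.mul_const c).comp_ofReal
  convert h2 using 1
  ring

lemma mainIdentity (c z v w cw dz' : ℂ) (hD : 1 + cw * v ≠ 0)
    (hc : c = (1 - w * cw) / 4)
    (hdz' : dz' = z * (1 - w * cw) / (1 + cw * v) ^ 2 * (Complex.I * v)) :
    -c * (((z * (1 + cw * v) - z * (v + w) * v) / (1 + cw * v) ^ 2) ^ 2 +
          (Complex.I * ((z * (1 + cw * v) + z * (v + w) * v) / (1 + cw * v) ^ 2)) ^ 2) +
      dz' * (Complex.I * (z * (v + w) / (1 + cw * v))) = 0 := by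
  subst hc hdz'
  have hI : (Complex.I) ^ 2 = -1 := Complex.I_sq
  set dx := (z * (1 + cw * v) - z * (v + w) * v) / (1 + cw * v) ^ 2 with hdx
  set dy0 := (z * (1 + cw * v) + z * (v + w) * v) / (1 + cw * v) ^ 2 with hdy0
  set dz0 := z * (v + w) / (1 + cw * v) with hdz0
  set c := (1 - w * cw) / 4 with hc
  set e0 := z * (1 - w * cw) / (1 + cw * v) ^ 2 * v with he0
  have step : -c * (dx ^ 2 + (Complex.I * dy0) ^ 2) +
      (z * (1 - w * cw) / (1 + cw * v) ^ 2 * (Complex.I * v)) * (Complex.I * dz0)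
      = -c * (dx ^ 2 - dy0 ^ 2) - e0 * dz0 := by
    linear_combination (-c * dy0 ^ 2 + e0 * dz0) * hI
  rw [step, hdx, hdy0, hdz0, hc, he0]
  field_simp
  ring

lemma hasDerivAt_Ufun_xi_zero (m : ℕ) (x y ξ : Fin (m+1) → ℝ) :
    HasDerivAt (fun t : ℝ => Ufun (m+1) x y (Function.update ξ 0 t))
      (I * Ufun (m+1) x y ξ) (ξ 0) := by
  have hf : (fun t : ℝ => Ufun (m+1) x y (Function.update ξ 0 t))
      = fun t : ℝ => Complex.exp (I * (t:ℂ)) *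
          ((Ufun m (x ∘ Fin.succ) (y ∘ Fin.succ) (ξ ∘ Fin.succ) + ((x 0 : ℂ) + (y 0 : ℂ) * I)) /
            (1 + (starRingEnd ℂ) ((x 0 : ℂ) + (y 0 : ℂ) * I) *
              Ufun m (x ∘ Fin.succ) (y ∘ Fin.succ) (ξ ∘ Fin.succ))) := by
    funext t
    rw [Ufun_succ, update_zero_comp, Function.update_self, mul_div_assoc]
  rw [hf]
  have h := hasDerivAt_expI ((Ufun m (x ∘ Fin.succ) (y ∘ Fin.succ) (ξ ∘ Fin.succ) +
      ((x 0 : ℂ) + (y 0 : ℂ) * I)) /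
      (1 + (starRingEnd ℂ) ((x 0 : ℂ) + (y 0 : ℂ) * I) *
        Ufun m (x ∘ Fin.succ) (y ∘ Fin.succ) (ξ ∘ Fin.succ))) (ξ 0)
  convert h using 1
  rw [Ufun_succ]
  ring

set_option maxHeartbeats 1000000 in
lemma key (n : ℕ) (x y ξ : Fin n → ℝ) (hxy : ∀ j, (x j) ^ 2 + (y j) ^ 2 < 1) (j : Fin n) :
    ∃ dx dy dz dz' : ℂ,
      HasDerivAt (fun t : ℝ => Ufun n (Function.update x j t) y ξ) dx (x j) ∧
      HasDerivAt (fun t : ℝ => Ufun n x (Function.update y j t) ξ) dy (y j) ∧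
      HasDerivAt (fun t : ℝ => Ufun n x y (Function.update ξ j t)) dz (ξ j) ∧
      (∀ h : (j : ℕ) + 1 < n,
        HasDerivAt (fun t : ℝ => Ufun n x y (Function.update ξ ⟨(j : ℕ) + 1, h⟩ t)) dz'
          (ξ ⟨(j : ℕ) + 1, h⟩)) ∧
      (¬ ((j : ℕ) + 1 < n) → dz' = 0) ∧
      -(((1 - (x j) ^ 2 - (y j) ^ 2) / 4 : ℝ) : ℂ) * (dx ^ 2 + dy ^ 2) + dz' * dz = 0 := by
  induction n with
  | zero => exact j.elim0
  | succ n ih =>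
    obtain ⟨jv, hj⟩ := j
    rcases jv with _ | k
    · -- j = 0
      simp only [show (⟨0, hj⟩ : Fin (n+1)) = 0 from rfl, Fin.val_zero]
      set z := Complex.exp (Complex.I * ((ξ 0 : ℝ) : ℂ)) with hz
      set v := Ufun n (x ∘ Fin.succ) (y ∘ Fin.succ) (ξ ∘ Fin.succ) with hv
      have hvle : ‖v‖ ≤ 1 := Ufun_norm_le _ _ _ _ (fun i => hxy i.succ)
      have hwlt : ‖((x 0 : ℝ):ℂ) + ((y 0 : ℝ):ℂ) * I‖ < 1 := norm_w_lt _ _ (hxy 0)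
      have hDc : 1 + (starRingEnd ℂ) (((x 0:ℝ):ℂ) + ((y 0:ℝ):ℂ)*I) * v ≠ 0 :=
        denom_ne _ _ hwlt hvle
      have hD : 1 + (((x 0:ℝ):ℂ) - ((y 0:ℝ):ℂ)*I) * v ≠ 0 := by rwa [conj_xI] at hDc
      have hfx : (fun t : ℝ => Ufun (n+1) (Function.update x 0 t) y ξ)
          = fun t : ℝ => z * (v + ((t:ℂ) + ((y 0:ℝ):ℂ)*I)) / (1 + ((t:ℂ) - ((y 0:ℝ):ℂ)*I) * v) := by
        funext t
        rw [hz, hv, Ufun_succ, update_zero_comp, Function.update_self, conj_xI]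
      have hfy : (fun t : ℝ => Ufun (n+1) x (Function.update y 0 t) ξ)
          = fun t : ℝ => z * (v + (((x 0:ℝ):ℂ) + (t:ℂ)*I)) / (1 + (((x 0:ℝ):ℂ) - (t:ℂ)*I) * v) := by
        funext t
        rw [hz, hv, Ufun_succ, update_zero_comp, Function.update_self, conj_xI]
      have hfz : (fun t : ℝ => Ufun (n+1) x y (Function.update ξ 0 t))
          = fun t : ℝ => Complex.exp (I * (t:ℂ)) *
              ((v + (((x 0:ℝ):ℂ) + ((y 0:ℝ):ℂ)*I)) / (1 + (((x 0:ℝ):ℂ) - ((y 0:ℝ):ℂ)*I) * v)) := by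
        funext t
        rw [hv, Ufun_succ, update_zero_comp, Function.update_self, conj_xI, mul_div_assoc]
      have hx : HasDerivAt (fun t : ℝ => Ufun (n+1) (Function.update x 0 t) y ξ)
          ((z * (1 + (((x 0:ℝ):ℂ) - ((y 0:ℝ):ℂ)*I)*v) - z * (v + (((x 0:ℝ):ℂ) + ((y 0:ℝ):ℂ)*I)) * v) /
            (1 + (((x 0:ℝ):ℂ) - ((y 0:ℝ):ℂ)*I)*v) ^ 2) (x 0) := by
        rw [hfx]; exact hasDerivAt_psiX z v (x 0) (y 0) hD
      have hy : HasDerivAt (fun t : ℝ => Ufun (n+1) x (Function.update y 0 t) ξ)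
          (I * ((z * (1 + (((x 0:ℝ):ℂ) - ((y 0:ℝ):ℂ)*I)*v) + z * (v + (((x 0:ℝ):ℂ) + ((y 0:ℝ):ℂ)*I)) * v) /
            (1 + (((x 0:ℝ):ℂ) - ((y 0:ℝ):ℂ)*I)*v) ^ 2)) (y 0) := by
        rw [hfy]; exact hasDerivAt_psiY z v (x 0) (y 0) hD
      have hzz : HasDerivAt (fun t : ℝ => Ufun (n+1) x y (Function.update ξ 0 t))
          (I * z * ((v + (((x 0:ℝ):ℂ) + ((y 0:ℝ):ℂ)*I)) / (1 + (((x 0:ℝ):ℂ) - ((y 0:ℝ):ℂ)*I) * v)))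
          (ξ 0) := by
        rw [hfz, hz]; exact hasDerivAt_expI _ _
      have hc : (((1 - (x 0) ^ 2 - (y 0) ^ 2) / 4 : ℝ) : ℂ)
          = (1 - (((x 0:ℝ):ℂ) + ((y 0:ℝ):ℂ)*I) * (((x 0:ℝ):ℂ) - ((y 0:ℝ):ℂ)*I)) / 4 := by
        push_cast
        linear_combination (-((y 0 : ℝ):ℂ) ^ 2 / 4) * Complex.I_sq
      refine ⟨_, _, _,
        if h0 : 0 < n then
          z * (1 - (((x 0:ℝ):ℂ) + ((y 0:ℝ):ℂ)*I) * (((x 0:ℝ):ℂ) - ((y 0:ℝ):ℂ)*I)) /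
            (1 + (((x 0:ℝ):ℂ) - ((y 0:ℝ):ℂ)*I) * v) ^ 2 * (I * v)
        else 0, hx, hy, hzz, ?_, ?_, ?_⟩
      · intro h
        have h0 : 0 < n := by omega
        rw [dif_pos h0]
        obtain ⟨m, rfl⟩ : ∃ m, n = m + 1 := ⟨n - 1, by omega⟩
        have hinner := hasDerivAt_Ufun_xi_zero m (x ∘ Fin.succ) (y ∘ Fin.succ) (ξ ∘ Fin.succ)
        have hfz1 : (fun t : ℝ => Ufun (m+1+1) x y (Function.update ξ ⟨0+1, h⟩ t))
            = fun t : ℝ => z * ((fun t : ℝ => Ufun (m+1) (x ∘ Fin.succ) (y ∘ Fin.succ)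
                  (Function.update (ξ ∘ Fin.succ) 0 t)) t + (((x 0:ℝ):ℂ) + ((y 0:ℝ):ℂ)*I)) /
                (1 + (((x 0:ℝ):ℂ) - ((y 0:ℝ):ℂ)*I) * (fun t : ℝ => Ufun (m+1) (x ∘ Fin.succ)
                  (y ∘ Fin.succ) (Function.update (ξ ∘ Fin.succ) 0 t)) t) := by
          funext t
          simp only []
          rw [hz, Ufun_succ, update_mk_succ_comp, update_mk_succ_zero, conj_xI]
          exact rfl
        have houter : HasDerivAt
            (fun s : ℂ => z * (s + (((x 0:ℝ):ℂ) + ((y 0:ℝ):ℂ)*I)) /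
              (1 + (((x 0:ℝ):ℂ) - ((y 0:ℝ):ℂ)*I) * s))
            (z * (1 - (((x 0:ℝ):ℂ) + ((y 0:ℝ):ℂ)*I) * (((x 0:ℝ):ℂ) - ((y 0:ℝ):ℂ)*I)) /
              (1 + (((x 0:ℝ):ℂ) - ((y 0:ℝ):ℂ)*I) * v) ^ 2) v := by
          have h' := hasDerivAt_psiV (((x 0:ℝ):ℂ) + ((y 0:ℝ):ℂ)*I) z v hDc
          simp only [conj_xI] at h'
          exact h'
        have hgv' : Function.update (ξ ∘ Fin.succ) 0 ((ξ ∘ Fin.succ) 0) = ξ ∘ Fin.succ :=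
          Function.update_eq_self _ _
        have houter2 : HasDerivAt
            (fun s : ℂ => z * (s + (((x 0:ℝ):ℂ) + ((y 0:ℝ):ℂ)*I)) /
              (1 + (((x 0:ℝ):ℂ) - ((y 0:ℝ):ℂ)*I) * s))
            (z * (1 - (((x 0:ℝ):ℂ) + ((y 0:ℝ):ℂ)*I) * (((x 0:ℝ):ℂ) - ((y 0:ℝ):ℂ)*I)) /
              (1 + (((x 0:ℝ):ℂ) - ((y 0:ℝ):ℂ)*I) * v) ^ 2)
            (Ufun (m+1) (x ∘ Fin.succ) (y ∘ Fin.succ)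
              (Function.update (ξ ∘ Fin.succ) 0 ((ξ ∘ Fin.succ) 0))) := by
          rw [hgv']
          exact houter
        have hcomp := houter2.comp ((ξ ∘ Fin.succ) 0) hinner
        rw [hfz1]
        exact hcomp
      · intro h0
        rw [dif_neg (by omega)]
      · by_cases h0 : 0 < n
        · rw [dif_pos h0]
          have hm := mainIdentity _ z v (((x 0:ℝ):ℂ) + ((y 0:ℝ):ℂ)*I)
            (((x 0:ℝ):ℂ) - ((y 0:ℝ):ℂ)*I) _ hD hc rfl
          linear_combination hm
        · rw [dif_neg h0]
          obtain rfl : n = 0 := by omega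
          have hv0 : v = 0 := by rw [hv]; exact Ufun_zero _ _ _
          have hm := mainIdentity _ z v (((x 0:ℝ):ℂ) + ((y 0:ℝ):ℂ)*I)
            (((x 0:ℝ):ℂ) - ((y 0:ℝ):ℂ)*I) 0 hD hc (by rw [hv0]; simp)
          linear_combination hm
    · -- j = k+1
      have hk : k < n := by omega
      obtain ⟨dx, dy, dz, dz', h1, h2, h3, h4, h5, h6⟩ :=
        ih (x ∘ Fin.succ) (y ∘ Fin.succ) (ξ ∘ Fin.succ) (fun i => hxy i.succ) ⟨k, hk⟩
      simp only [Fin.val_mk] at h4 h5 ⊢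
      set z := Complex.exp (Complex.I * ((ξ 0 : ℝ) : ℂ)) with hz
      set v := Ufun n (x ∘ Fin.succ) (y ∘ Fin.succ) (ξ ∘ Fin.succ) with hv
      have hvle : ‖v‖ ≤ 1 := Ufun_norm_le _ _ _ _ (fun i => hxy i.succ)
      have hwlt : ‖((x 0 : ℝ):ℂ) + ((y 0 : ℝ):ℂ) * I‖ < 1 := norm_w_lt _ _ (hxy 0)
      have hDc : 1 + (starRingEnd ℂ) (((x 0:ℝ):ℂ) + ((y 0:ℝ):ℂ)*I) * v ≠ 0 :=
        denom_ne _ _ hwlt hvle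
      set c0 := z * (1 - (((x 0:ℝ):ℂ) + ((y 0:ℝ):ℂ)*I) * (((x 0:ℝ):ℂ) - ((y 0:ℝ):ℂ)*I)) /
        (1 + (((x 0:ℝ):ℂ) - ((y 0:ℝ):ℂ)*I) * v) ^ 2 with hc0
      have houter : HasDerivAt
          (fun s : ℂ => z * (s + (((x 0:ℝ):ℂ) + ((y 0:ℝ):ℂ)*I)) /
            (1 + (((x 0:ℝ):ℂ) - ((y 0:ℝ):ℂ)*I) * s)) c0 v := by
        rw [hc0]
        have h' := hasDerivAt_psiV (((x 0:ℝ):ℂ) + ((y 0:ℝ):ℂ)*I) z v hDc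
        simp only [conj_xI] at h'
        exact h'
      have comp3 : ∀ (g : ℝ → ℂ) (d : ℂ) (t0 : ℝ), HasDerivAt g d t0 → g t0 = v →
          HasDerivAt (fun t : ℝ => z * (g t + (((x 0:ℝ):ℂ) + ((y 0:ℝ):ℂ)*I)) /
            (1 + (((x 0:ℝ):ℂ) - ((y 0:ℝ):ℂ)*I) * g t)) (c0 * d) t0 := by
        intro g d t0 hg hgv
        have h' := houter
        rw [← hgv] at h'
        exact h'.comp t0 hg
      refine ⟨c0 * dx, c0 * dy, c0 * dz, c0 * dz', ?_, ?_, ?_, ?_, ?_, ?_⟩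
      · have hcmp := comp3 (fun t : ℝ => Ufun n (Function.update (x ∘ Fin.succ) ⟨k, hk⟩ t)
            (y ∘ Fin.succ) (ξ ∘ Fin.succ)) dx ((x ∘ Fin.succ) ⟨k, hk⟩) h1
          (by simp only [Function.update_eq_self]; rfl)
        have hfun : (fun t : ℝ => Ufun (n+1) (Function.update x ⟨k+1, hj⟩ t) y ξ)
            = fun t : ℝ => z * (Ufun n (Function.update (x ∘ Fin.succ) ⟨k, hk⟩ t)
                  (y ∘ Fin.succ) (ξ ∘ Fin.succ) + (((x 0:ℝ):ℂ) + ((y 0:ℝ):ℂ)*I)) /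
                (1 + (((x 0:ℝ):ℂ) - ((y 0:ℝ):ℂ)*I) * Ufun n (Function.update (x ∘ Fin.succ)
                  ⟨k, hk⟩ t) (y ∘ Fin.succ) (ξ ∘ Fin.succ)) := by
          funext t
          rw [hz, Ufun_succ, update_mk_succ_comp, update_mk_succ_zero, conj_xI]
        rw [hfun]
        exact hcmp
      · have hcmp := comp3 (fun t : ℝ => Ufun n (x ∘ Fin.succ)
            (Function.update (y ∘ Fin.succ) ⟨k, hk⟩ t) (ξ ∘ Fin.succ)) dy ((y ∘ Fin.succ) ⟨k, hk⟩) h2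
          (by simp only [Function.update_eq_self]; rfl)
        have hfun : (fun t : ℝ => Ufun (n+1) x (Function.update y ⟨k+1, hj⟩ t) ξ)
            = fun t : ℝ => z * (Ufun n (x ∘ Fin.succ) (Function.update (y ∘ Fin.succ) ⟨k, hk⟩ t)
                  (ξ ∘ Fin.succ) + (((x 0:ℝ):ℂ) + ((y 0:ℝ):ℂ)*I)) /
                (1 + (((x 0:ℝ):ℂ) - ((y 0:ℝ):ℂ)*I) * Ufun n (x ∘ Fin.succ)
                  (Function.update (y ∘ Fin.succ) ⟨k, hk⟩ t) (ξ ∘ Fin.succ)) := by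
          funext t
          rw [hz, Ufun_succ, update_mk_succ_comp, update_mk_succ_zero, conj_xI]
        rw [hfun]
        exact hcmp
      · have hcmp := comp3 (fun t : ℝ => Ufun n (x ∘ Fin.succ) (y ∘ Fin.succ)
            (Function.update (ξ ∘ Fin.succ) ⟨k, hk⟩ t)) dz ((ξ ∘ Fin.succ) ⟨k, hk⟩) h3
          (by simp only [Function.update_eq_self]; rfl)
        have hfun : (fun t : ℝ => Ufun (n+1) x y (Function.update ξ ⟨k+1, hj⟩ t))
            = fun t : ℝ => z * (Ufun n (x ∘ Fin.succ) (y ∘ Fin.succ)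
                  (Function.update (ξ ∘ Fin.succ) ⟨k, hk⟩ t) + (((x 0:ℝ):ℂ) + ((y 0:ℝ):ℂ)*I)) /
                (1 + (((x 0:ℝ):ℂ) - ((y 0:ℝ):ℂ)*I) * Ufun n (x ∘ Fin.succ) (y ∘ Fin.succ)
                  (Function.update (ξ ∘ Fin.succ) ⟨k, hk⟩ t)) := by
          funext t
          rw [hz, Ufun_succ, update_mk_succ_comp, update_mk_succ_zero, conj_xI]
        rw [hfun]
        exact hcmp
      · intro h
        have hk2 : k + 1 < n := by omega
        have hcmp := comp3 (fun t : ℝ => Ufun n (x ∘ Fin.succ) (y ∘ Fin.succ)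
            (Function.update (ξ ∘ Fin.succ) ⟨k+1, hk2⟩ t)) dz' ((ξ ∘ Fin.succ) ⟨k+1, hk2⟩) (h4 hk2)
          (by simp only [Function.update_eq_self]; rfl)
        have hfun : (fun t : ℝ => Ufun (n+1) x y (Function.update ξ ⟨k+1+1, h⟩ t))
            = fun t : ℝ => z * (Ufun n (x ∘ Fin.succ) (y ∘ Fin.succ)
                  (Function.update (ξ ∘ Fin.succ) ⟨k+1, hk2⟩ t) + (((x 0:ℝ):ℂ) + ((y 0:ℝ):ℂ)*I)) /
                (1 + (((x 0:ℝ):ℂ) - ((y 0:ℝ):ℂ)*I) * Ufun n (x ∘ Fin.succ) (y ∘ Fin.succ)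
                  (Function.update (ξ ∘ Fin.succ) ⟨k+1, hk2⟩ t)) := by
          funext t
          rw [hz, Ufun_succ, update_mk_succ_comp, update_mk_succ_zero, conj_xI]
        rw [hfun]
        exact hcmp
      · intro hnot
        rw [h5 (fun hc => hnot (Nat.succ_lt_succ hc)), mul_zero]
      · have e1 : (x ∘ Fin.succ) (⟨k, hk⟩ : Fin n) = x ⟨k+1, hj⟩ := rfl
        have e2 : (y ∘ Fin.succ) (⟨k, hk⟩ : Fin n) = y ⟨k+1, hj⟩ := rfl
        rw [e1, e2] at h6
        linear_combination c0 ^ 2 * h6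

end Statement12Helpers

/-- for every `1 ≤ j ≤ n` and every point of `Dⁿ × ℝⁿ`,
`-((1-x_j²-y_j²)/4)((∂U/∂x_j)² + (∂U/∂y_j)²) + (∂U/∂ξ_{j+1})(∂U/∂ξ_j) = 0`,
with `∂U/∂ξ_{n+1}` interpreted as `0`. -/
theorem statement12 (n : ℕ) (hn : 1 ≤ n) (x y ξ : Fin n → ℝ)
    (hxy : ∀ j, (x j) ^ 2 + (y j) ^ 2 < 1) (j : Fin n) :
    -(((1 - (x j) ^ 2 - (y j) ^ 2) / 4 : ℝ) : ℂ) *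
        ((deriv (fun t : ℝ => Ufun n (Function.update x j t) y ξ) (x j)) ^ 2 +
         (deriv (fun t : ℝ => Ufun n x (Function.update y j t) ξ) (y j)) ^ 2) +
      (if h : (j : ℕ) + 1 < n then
          deriv (fun t : ℝ => Ufun n x y (Function.update ξ ⟨(j : ℕ) + 1, h⟩ t))
            (ξ ⟨(j : ℕ) + 1, h⟩)
        else 0) *
        deriv (fun t : ℝ => Ufun n x y (Function.update ξ j t)) (ξ j) = 0 := by
  obtain ⟨dx, dy, dz, dz', h1, h2, h3, h4, h5, h6⟩ := key n x y ξ hxy j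
  rw [h1.deriv, h2.deriv, h3.deriv]
  by_cases h : (j : ℕ) + 1 < n
  · rw [dif_pos h, (h4 h).deriv]
    exact h6
  · rw [dif_neg h]
    rw [h5 h] at h6
    simpa using h6
end
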